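/- arXiv:1312.4639 — 2 statements merged into one kernel-verified Lean document; each statement's English description precedes it below -/
import Mathlib

section
/- For every natural number m ≥ 1, setting N = f_4(6m − 3) (where (f_i) is the Ackermann hierarchy), for every coloring c of the nonempty subsets of {0,…,N−1} with 2 colors there exists a block sequence x_0 < … < x_{m−1} of nonempty subsets of {0,…,N−1} such that c is constant on the combinatorial space ⟨x_i⟩_{i<m}. -/
/-- The block relation on finite sets: `max x < min y`. -/
def BlkS (x y : Finset ℕ) : Prop :=
  ∀ i ∈ x, ∀ j ∈ y, i < j

/-- `(X i)_{i<m}` is a block sequence of nonempty finite sets. -/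
def IsBlockSeqS (m : ℕ) (X : ℕ → Finset ℕ) : Prop :=
  ∀ i j : ℕ, i < j → j < m → BlkS (X i) (X j)

/-- `(G i)_{i<d}` is a block sequence (a `d`-tuple version). -/
def IsBlockTupleS (d : ℕ) (G : Fin d → Finset ℕ) : Prop :=
  ∀ i j : Fin d, i < j → BlkS (G i) (G j)

/-- The combinatorial space `⟨X i⟩_{i<m}`: all unions `⋃_{i ∈ s} X i` with `∅ ≠ s ⊆ {0,…,m-1}`. -/
def CombSpaceS (m : ℕ) (X : ℕ → Finset ℕ) : Set (Finset ℕ) :=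
  {z | ∃ s : Finset ℕ, s.Nonempty ∧ (∀ i ∈ s, i < m) ∧ z = s.biUnion X}

/-- The Ackermann hierarchy: `f₁ x = 2 x` and `f_{i+1} x = f_i^{(x)} 1`. -/
def fAck : ℕ → ℕ → ℕ
  | 0, x => x
  | 1, x => 2 * x
  | n + 2, x => (fAck (n + 1))^[x] 1

namespace FK


lemma fAck_two_eq (x : ℕ) : fAck 2 x = 2 ^ x := by
  show (fAck 1)^[x] 1 = 2 ^ x
  induction x with
  | zero => rfl
  | succ n ih =>
      rw [Function.iterate_succ_apply']
      show 2 * ((fAck 1)^[n] 1) = _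
      rw [ih, pow_succ]; ring

lemma T_zero : fAck 3 0 = 1 := rfl

lemma T_succ (x : ℕ) : fAck 3 (x + 1) = 2 ^ fAck 3 x := by
  show (fAck 2)^[x+1] 1 = _
  rw [Function.iterate_succ_apply']
  rw [show ((fAck 2)^[x] 1) = fAck 3 x from rfl, fAck_two_eq]

lemma T_mono : Monotone (fAck 3) := by
  apply monotone_nat_of_le_succ
  intro n
  rw [T_succ]
  exact le_of_lt (Nat.lt_two_pow_self)

lemma lt_T (x : ℕ) : x < fAck 3 x := by
  induction x with
  | zero => norm_num [T_zero]
  | succ n ih =>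
      rw [T_succ]
      calc n + 1 ≤ fAck 3 n := ih
        _ < 2 ^ fAck 3 n := Nat.lt_two_pow_self

lemma le_T (x : ℕ) : x ≤ fAck 3 x := (lt_T x).le

lemma one_le_T (x : ℕ) : 1 ≤ fAck 3 x := by
  have := T_mono (Nat.zero_le x); simpa [T_zero] using this

lemma fAck4_eq (x : ℕ) : fAck 4 x = (fAck 3)^[x] 1 := rfl

lemma one_le_T_iter (k : ℕ) : 1 ≤ (fAck 3)^[k] 1 := by
  induction k with
  | zero => simp
  | succ n ih =>
      rw [Function.iterate_succ_apply']
      exact le_trans ih (le_trans (le_T _) (le_refl _))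

lemma T_iter_mono_left (a b : ℕ) (h : a ≤ b) : (fAck 3)^[a] 1 ≤ (fAck 3)^[b] 1 := by
  obtain ⟨k, rfl⟩ := Nat.exists_eq_add_of_le h
  rw [Function.iterate_add_apply]
  exact (T_mono.iterate a) (one_le_T_iter k)

/-- exact identity: applying `2^·` j times to `T y` gives `T (y+j)` -/
lemma E_iter_T (j y : ℕ) : (fun z => 2 ^ z)^[j] (fAck 3 y) = fAck 3 (y + j) := by
  induction j with
  | zero => simp
  | succ n ih => rw [Function.iterate_succ_apply', ih, ← T_succ]; rfl

lemma E_mono : Monotone (fun z : ℕ => 2 ^ z) := fun a b h => Nat.pow_le_pow_right (by norm_num) h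

lemma le_E_iter (j x : ℕ) : x ≤ (fun z => 2 ^ z)^[j] x := by
  induction j with
  | zero => simp
  | succ n ih =>
      rw [Function.iterate_succ_apply']
      exact le_trans ih (le_of_lt (Nat.lt_two_pow_self))

-- small arithmetic helpers
lemma two_pow_le_T_succ (x : ℕ) : 2 ^ x ≤ fAck 3 (x + 1) := by
  rw [T_succ]
  exact Nat.pow_le_pow_right (by norm_num) (le_T x)

lemma T_iter_two : (fAck 3)^[2] 1 = 4 := by
  have h1 : (fAck 3)^[2] 1 = fAck 3 (fAck 3 1) := by
    rw [show (2:ℕ) = 1 + 1 from rfl, Function.iterate_succ_apply',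
      Function.iterate_succ_apply', Function.iterate_zero_apply]
  have h2 : fAck 3 1 = 2 := by
    rw [show (1:ℕ) = 0 + 1 from rfl, T_succ, T_zero]; norm_num
  rw [h1, h2, show (2:ℕ) = 1 + 1 from rfl, T_succ]
  rw [show (1:ℕ) = 0 + 1 from rfl, T_succ, T_zero]
  norm_num

lemma two_mul_le_two_pow (a : ℕ) (h : 2 ≤ a) : 2 * a ≤ 2 ^ a := by
  induction a with
  | zero => omega
  | succ n ih =>
      rcases Nat.lt_or_ge n 2 with h2 | h2
      · interval_cases n <;> simp_all <;> omega
      · have := ih h2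
        rw [pow_succ]
        omega

lemma three_mul_le_two_pow (a : ℕ) (h : 4 ≤ a) : 3 * a ≤ 2 ^ a := by
  induction a with
  | zero => omega
  | succ n ih =>
      rcases Nat.lt_or_ge n 4 with h2 | h2
      · interval_cases n <;> simp_all <;> omega
      · have := ih h2
        rw [pow_succ]
        omega


lemma fin2_eq_of_iff {x y : Fin 2} (h : (x = 0) ↔ (y = 0)) : x = y := by
  revert h; revert x y; decide

def dfinB : ℕ → ℕ
  | 0 => 0
  | d + 1 => dfinB d + 2 ^ (2 ^ (dfinB d)) + 1

lemma dfin (d : ℕ) (χ : Finset ℕ → Fin 2) :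
    ∃ (F : Finset ℕ) (W : ℕ → Finset ℕ),
      F ⊆ Finset.range (dfinB d) ∧
      (∀ j, W j ⊆ Finset.range (dfinB d)) ∧
      (∀ j, j < d → (W j).Nonempty) ∧
      (∀ j, Disjoint F (W j)) ∧
      (∀ j j', j ≠ j' → Disjoint (W j) (W j')) ∧
      (∀ s : Finset ℕ, χ (F ∪ s.biUnion W) = χ F) := by
  induction d generalizing χ with
  | zero =>
      refine ⟨∅, fun _ => ∅, by simp, by simp, by omega, by simp, by simp, ?_⟩
      intro s
      have h : s.biUnion (fun _ => (∅ : Finset ℕ)) = ∅ := by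
        ext x; simp
      rw [h, Finset.union_empty]
  | succ d ih =>
      set n' := dfinB d with hn'
      set R := 2 ^ (2 ^ n') with hR
      set τ : ℕ → Finset (Finset ℕ) := fun t =>
        (Finset.range n').powerset.filter (fun q => χ (q ∪ Finset.Ico n' (n' + t)) = 0) with hτ
      have maps : ∀ t ∈ Finset.range (R + 1), τ t ∈ (Finset.range n').powerset.powerset := by
        intro t _
        simp only [Finset.mem_powerset, hτ]
        exact Finset.filter_subset _ _
      have hcard : ((Finset.range n').powerset.powerset).card < (Finset.range (R + 1)).card := by
        simp [Finset.card_powerset, Finset.card_range, hR]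
      obtain ⟨i0, hi0, j0, hj0, hij0, hτeq0⟩ :=
        Finset.exists_ne_map_eq_of_card_lt_of_maps_to hcard maps
      -- order them
      obtain ⟨i, j, hij, hτeq, hjR⟩ : ∃ i j, i < j ∧ τ i = τ j ∧ j ≤ R := by
        rcases Nat.lt_or_ge i0 j0 with h | h
        · exact ⟨i0, j0, h, hτeq0, by simpa using Nat.lt_succ_iff.mp (Finset.mem_range.mp hj0)⟩
        · have : j0 < i0 := lt_of_le_of_ne h (Ne.symm hij0)
          exact ⟨j0, i0, this, hτeq0.symm, by simpa using Nat.lt_succ_iff.mp (Finset.mem_range.mp hi0)⟩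
      have key : ∀ q ⊆ Finset.range n',
          χ (q ∪ Finset.Ico n' (n' + i)) = χ (q ∪ Finset.Ico n' (n' + j)) := by
        intro q hq
        have h1 : (q ∈ τ i) ↔ (q ∈ τ j) := by rw [hτeq]
        simp only [hτ, Finset.mem_filter, Finset.mem_powerset] at h1
        apply fin2_eq_of_iff
        constructor
        · intro h; exact (h1.mp ⟨hq, h⟩).2
        · intro h; exact (h1.mpr ⟨hq, h⟩).2
      set B := Finset.Ico n' (n' + i) with hB
      set Wd := Finset.Ico (n' + i) (n' + j) with hWd
      have hBW : B ∪ Wd = Finset.Ico n' (n' + j) :=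
        Finset.Ico_union_Ico_eq_Ico (Nat.le_add_right _ _) (by omega)
      obtain ⟨F', W', hF'sub, hW'sub, hW'ne, hF'W', hW'W', hkey'⟩ := ih (fun q => χ (q ∪ B))
      have hdB : dfinB (d+1) = n' + R + 1 := rfl
      have hrange : Finset.range n' ⊆ Finset.range (dfinB (d+1)) := by
        intro x hx; simp only [Finset.mem_range] at hx ⊢; omega
      set Wfun : ℕ → Finset ℕ := fun t => if t = d then Wd else W' t with hWfun
      have hWfd : Wfun d = Wd := by simp [hWfun]
      have hWfne : ∀ t, t ≠ d → Wfun t = W' t := by intro t ht; simp [hWfun, ht]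
      have hWdsub : Wd ⊆ Finset.range (dfinB (d+1)) := by
        intro x hx
        simp only [hWd, Finset.mem_Ico] at hx
        simp only [Finset.mem_range]
        omega
      have hBsub : B ⊆ Finset.range (dfinB (d+1)) := by
        intro x hx
        simp only [hB, Finset.mem_Ico] at hx
        simp only [Finset.mem_range]
        omega
      have hBn' : ∀ x ∈ B, n' ≤ x := by
        intro x hx; simp only [hB, Finset.mem_Ico] at hx; omega
      have hWdn' : ∀ x ∈ Wd, n' + i ≤ x := by
        intro x hx; simp only [hWd, Finset.mem_Ico] at hx; omega
      have hlow : ∀ (u : Finset ℕ), u ⊆ Finset.range n' → Disjoint u Wd ∧ Disjoint u B := by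
        intro u hu
        constructor <;> (rw [Finset.disjoint_left]; intro x hx hx')
        · have h1 := hu hx; simp only [Finset.mem_range] at h1
          have := hWdn' x hx'; omega
        · have h1 := hu hx; simp only [Finset.mem_range] at h1
          have := hBn' x hx'; omega
      refine ⟨F' ∪ B, Wfun, ?_, ?_, ?_, ?_, ?_, ?_⟩
      · exact Finset.union_subset (hF'sub.trans hrange) hBsub
      · intro t
        by_cases ht : t = d
        · subst ht; rw [hWfd]; exact hWdsub
        · rw [hWfne t ht]; exact (hW'sub t).trans hrange
      · intro t ht
        by_cases h : t = d
        · subst h; rw [hWfd]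
          exact Finset.nonempty_Ico.mpr (by omega)
        · rw [hWfne t h]
          exact hW'ne t (by omega)
      · intro t
        by_cases h : t = d
        · subst h; rw [hWfd]
          apply Finset.disjoint_union_left.mpr
          exact ⟨(hlow F' hF'sub).1, Finset.Ico_disjoint_Ico_consecutive _ _ _⟩
        · rw [hWfne t h]
          apply Finset.disjoint_union_left.mpr
          exact ⟨hF'W' t, ((hlow (W' t) (hW'sub t)).2).symm⟩
      · intro t t' htt'
        by_cases h : t = d <;> by_cases h' : t' = d
        · omega
        · subst h; rw [hWfd, hWfne t' h']
          exact ((hlow (W' t') (hW'sub t')).1).symm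
        · subst h'; rw [hWfd, hWfne t h]
          exact (hlow (W' t) (hW'sub t)).1
        · rw [hWfne t h, hWfne t' h']
          exact hW'W' t t' htt'
      · intro s
        have hkey2 : ∀ q : Finset ℕ, χ ((F' ∪ q.biUnion W') ∪ B) = χ (F' ∪ B) := by
          intro q; exact hkey' q
        by_cases hd : d ∈ s
        · have hsplit : (F' ∪ B) ∪ s.biUnion Wfun
              = (F' ∪ (s.erase d).biUnion W') ∪ (B ∪ Wd) := by
            ext x
            simp only [Finset.mem_union, Finset.mem_biUnion, Finset.mem_erase]
            constructor
            · rintro (⟨h1 | h1⟩ | ⟨t, ht, hx⟩)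
              · exact Or.inl (Or.inl h1)
              · exact Or.inr (Or.inl h1)
              · by_cases h : t = d
                · subst h; rw [hWfd] at hx; exact Or.inr (Or.inr hx)
                · rw [hWfne t h] at hx; exact Or.inl (Or.inr ⟨t, ⟨h, ht⟩, hx⟩)
            · rintro (⟨h1 | ⟨t, ⟨htd, hts⟩, hx⟩⟩ | (h1 | h1))
              · exact Or.inl (Or.inl h1)
              · exact Or.inr ⟨t, hts, by rw [hWfne t htd]; exact hx⟩
              · exact Or.inl (Or.inr h1)
              · exact Or.inr ⟨d, hd, by rw [hWfd]; exact h1⟩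
          rw [hsplit, hBW]
          have hqsub : F' ∪ (s.erase d).biUnion W' ⊆ Finset.range n' := by
            apply Finset.union_subset hF'sub
            intro x hx
            obtain ⟨t, _, hx⟩ := Finset.mem_biUnion.mp hx
            exact hW'sub t hx
          calc χ ((F' ∪ (s.erase d).biUnion W') ∪ Finset.Ico n' (n' + j))
              = χ ((F' ∪ (s.erase d).biUnion W') ∪ Finset.Ico n' (n' + i)) := (key _ hqsub).symm
            _ = χ ((F' ∪ (s.erase d).biUnion W') ∪ B) := by rw [hB]
            _ = χ (F' ∪ B) := hkey2 _
        · have hbi : s.biUnion Wfun = s.biUnion W' := by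
            apply Finset.biUnion_congr rfl
            intro t ht
            exact hWfne t (by rintro rfl; exact hd ht)
          rw [hbi]
          have e2 : (F' ∪ B) ∪ s.biUnion W' = (F' ∪ s.biUnion W') ∪ B := by
            ext x; simp only [Finset.mem_union]; tauto
          rw [e2]
          exact hkey2 s

def mdB : ℕ → ℕ
  | 0 => 0
  | L + 1 => dfinB (mdB L) + 1

lemma biUnion_disjoint_of_disjoint {s t : Finset ℕ} {W : ℕ → Finset ℕ}
    (hst : Disjoint s t) (hW : ∀ j j', j ≠ j' → Disjoint (W j) (W j')) :
    Disjoint (s.biUnion W) (t.biUnion W) := by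
  rw [Finset.disjoint_left]
  intro x hx hx'
  obtain ⟨a, ha, hxa⟩ := Finset.mem_biUnion.mp hx
  obtain ⟨b, hb, hxb⟩ := Finset.mem_biUnion.mp hx'
  have hab : a ≠ b := by
    rintro rfl
    exact (Finset.disjoint_left.mp hst) ha hb
  exact (Finset.disjoint_left.mp (hW a b hab)) hxa hxb

lemma min'_image_pred (s : Finset ℕ) (hs : s.Nonempty) (h0 : 0 ∉ s) :
    (s.image (· - 1)).min' (hs.image _) = s.min' hs - 1 := by
  apply le_antisymm
  · exact Finset.min'_le _ _ (Finset.mem_image_of_mem _ (s.min'_mem hs))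
  · apply Finset.le_min'
    intro y hy
    obtain ⟨i, hi, rfl⟩ := Finset.mem_image.mp hy
    exact Nat.sub_le_sub_right (Finset.min'_le s i hi) 1

lemma md (L : ℕ) (χ : Finset ℕ → Fin 2) :
    ∃ (B : ℕ → Finset ℕ) (v : ℕ → Fin 2),
      (∀ i, i < L → (B i).Nonempty) ∧
      (∀ i, B i ⊆ Finset.range (mdB L)) ∧
      (∀ i i', i ≠ i' → Disjoint (B i) (B i')) ∧
      (∀ s : Finset ℕ, ∀ hs : s.Nonempty, (∀ i ∈ s, i < L) →
        χ (s.biUnion B) = v (s.min' hs)) := by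
  induction L generalizing χ with
  | zero =>
      refine ⟨fun _ => ∅, fun _ => 0, by omega, by simp, by simp, ?_⟩
      intro s hs hlt
      obtain ⟨i, hi⟩ := hs
      exact absurd (hlt i hi) (by omega)
  | succ L ih =>
      set d := mdB L with hd
      set p := dfinB d with hp
      obtain ⟨F, W, hFsub, hWsub, hWne, hFW, hWW, hkey⟩ := dfin d (fun q => χ (insert p q))
      obtain ⟨B', v', hB'ne, hB'sub, hB'disj, hkey'⟩ := ih (fun s => χ (s.biUnion W))
      set Bf : ℕ → Finset ℕ := fun i => if i = 0 then insert p F else (B' (i - 1)).biUnion W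
        with hBf
      have hBf0 : Bf 0 = insert p F := by simp [hBf]
      have hBfs : ∀ i, i ≠ 0 → Bf i = (B' (i - 1)).biUnion W := by
        intro i hi; simp [hBf, hi]
      have hpnotrange : p ∉ Finset.range (dfinB d) := by simp [hp]
      have hWrange : ∀ (q : Finset ℕ), q.biUnion W ⊆ Finset.range (dfinB d) := by
        intro q
        intro x hx
        obtain ⟨t, _, hx⟩ := Finset.mem_biUnion.mp hx
        exact hWsub t hx
      set vf : ℕ → Fin 2 := fun i => if i = 0 then χ (insert p F) else v' (i - 1) with hvf
      have hvf0 : vf 0 = χ (insert p F) := by simp [hvf]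
      have hvfs : ∀ i, i ≠ 0 → vf i = v' (i - 1) := by intro i hi; simp [hvf, hi]
      refine ⟨Bf, vf, ?_, ?_, ?_, ?_⟩
      · intro i hi
        by_cases h : i = 0
        · subst h; rw [hBf0]; exact Finset.insert_nonempty _ _
        · rw [hBfs i h]
          obtain ⟨a, ha⟩ := hB'ne (i - 1) (by omega)
          have halt : a < d := by
            have := hB'sub (i-1) ha
            simpa [hd, Finset.mem_range] using this
          obtain ⟨x, hx⟩ := hWne a halt
          exact ⟨x, Finset.mem_biUnion.mpr ⟨a, ha, hx⟩⟩
      · intro i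
        have hmdB : mdB (L + 1) = dfinB d + 1 := rfl
        by_cases h : i = 0
        · subst h; rw [hBf0]
          intro x hx
          rcases Finset.mem_insert.mp hx with rfl | hx
          · simp [Finset.mem_range, hmdB, hp]
          · have := hFsub hx
            simp only [Finset.mem_range] at this ⊢
            omega
        · rw [hBfs i h]
          intro x hx
          have := hWrange (B' (i-1)) hx
          simp only [Finset.mem_range] at this ⊢
          omega
      · intro i i' hii'
        by_cases h : i = 0 <;> by_cases h' : i' = 0
        · omega
        · subst h; rw [hBf0, hBfs i' h']
          rw [Finset.disjoint_left]
          intro x hx hx'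
          have hxr := hWrange (B' (i'-1)) hx'
          rcases Finset.mem_insert.mp hx with rfl | hx
          · exact hpnotrange hxr
          · obtain ⟨t, _, hxt⟩ := Finset.mem_biUnion.mp hx'
            exact (Finset.disjoint_left.mp (hFW t)) hx hxt
        · subst h'; rw [hBf0, hBfs i h]
          rw [Finset.disjoint_left]
          intro x hx hx'
          have hxr := hWrange (B' (i-1)) hx
          rcases Finset.mem_insert.mp hx' with heq | hx'
          · subst heq; exact hpnotrange hxr
          · obtain ⟨t, _, hxt⟩ := Finset.mem_biUnion.mp hx
            exact (Finset.disjoint_left.mp (hFW t)) hx' hxt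
        · rw [hBfs i h, hBfs i' h']
          exact biUnion_disjoint_of_disjoint (hB'disj (i-1) (i'-1) (by omega)) hWW
      · intro s hs hlt
        by_cases h0 : 0 ∈ s
        · have hmin : s.min' hs = 0 := by
            have h1 := Finset.min'_le s 0 h0
            omega
          rw [hmin, hvf0]
          set X : Finset ℕ := ((s.erase 0).image (· - 1)).biUnion B' with hX
          have hsplit : s.biUnion Bf = insert p (F ∪ X.biUnion W) := by
            ext x
            simp only [Finset.mem_biUnion, Finset.mem_insert, Finset.mem_union]
            constructor
            · rintro ⟨i, hi, hx⟩
              by_cases h : i = 0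
              · subst h; rw [hBf0] at hx
                rcases Finset.mem_insert.mp hx with rfl | hx
                · exact Or.inl rfl
                · exact Or.inr (Or.inl hx)
              · rw [hBfs i h] at hx
                obtain ⟨t, ht, hx⟩ := Finset.mem_biUnion.mp hx
                refine Or.inr (Or.inr ?_)
                refine ⟨t, ?_, hx⟩
                rw [hX]
                exact Finset.mem_biUnion.mpr
                  ⟨i - 1, Finset.mem_image.mpr ⟨i, Finset.mem_erase.mpr ⟨h, hi⟩, rfl⟩, ht⟩
            · rintro (rfl | hx | ⟨t, ht, hx⟩)
              · exact ⟨0, h0, by rw [hBf0]; exact Finset.mem_insert_self _ _⟩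
              · exact ⟨0, h0, by rw [hBf0]; exact Finset.mem_insert_of_mem hx⟩
              · rw [hX] at ht
                obtain ⟨i1, hi1, ht⟩ := Finset.mem_biUnion.mp ht
                obtain ⟨i, hi, rfl⟩ := Finset.mem_image.mp hi1
                have hine := (Finset.mem_erase.mp hi).1
                refine ⟨i, (Finset.mem_erase.mp hi).2, ?_⟩
                rw [hBfs i hine]
                exact Finset.mem_biUnion.mpr ⟨t, ht, hx⟩
          rw [hsplit]
          have : insert p (F ∪ X.biUnion W) = insert p (F ∪ X.biUnion W) := rfl
          exact hkey X
        · have hbi : s.biUnion Bf = ((s.image (· - 1)).biUnion B').biUnion W := by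
            rw [Finset.image_biUnion, Finset.biUnion_biUnion]
            apply Finset.biUnion_congr rfl
            intro i hi
            rw [hBfs i (by rintro rfl; exact h0 hi)]
          rw [hbi]
          have himg : ∀ i ∈ s.image (· - 1), i < L := by
            intro i hi
            obtain ⟨i0, hi0, rfl⟩ := Finset.mem_image.mp hi
            have h1 := hlt i0 hi0
            have h2 : i0 ≠ 0 := by rintro rfl; exact h0 hi0
            omega
          have h2 := hkey' (s.image (· - 1)) (hs.image _) himg
          rw [h2]
          have hminne : s.min' hs ≠ 0 := by
            intro h
            exact h0 (h ▸ s.min'_mem hs)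
          rw [hvfs _ hminne, min'_image_pred s hs h0]

variable {G : Type} [DecidableEq G] [Fintype G]

def tB (c M : ℕ) : ℕ → ℕ
  | 0 => 0
  | r + 1 => 2 ^ (2 ^ (M + 1) * c) * tB c M r + 1

def ramB : ℕ → ℕ → ℕ → ℕ
  | 0, _, s => s
  | k + 1, c, s => (c + 1) * (s + 1) + tB c (ramB k c s) (ramB k c s)

def PreHom (κ : Finset ℕ → G) (k : ℕ) (A : Finset ℕ) : Prop :=
  ∀ S, S ⊆ A → S.card = k → ∀ b ∈ A, ∀ b' ∈ A,
    (∀ x ∈ S, x < b) → (∀ x ∈ S, x < b') → κ (insert b S) = κ (insert b' S)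

lemma tree (κ : Finset ℕ → G) (k M : ℕ) (hk : 1 ≤ k) :
    ∀ (r : ℕ) (A L : Finset ℕ),
      A.card + r ≤ M →
      (∀ a ∈ A, ∀ x ∈ L, a < x) →
      (∀ S, S ⊆ A → S.card = k → ∀ b ∈ L, ∀ b' ∈ L, κ (insert b S) = κ (insert b' S)) →
      (∀ S, S ⊆ A → S.card = k → ∀ b ∈ A, (∀ x ∈ S, x < b) →
        ∀ x ∈ L, κ (insert b S) = κ (insert x S)) →
      PreHom κ k A →
      tB (Fintype.card G) M r ≤ L.card →
      ∃ A', A ⊆ A' ∧ A' ⊆ A ∪ L ∧ A'.card = A.card + r ∧ PreHom κ k A' := by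
  intro r
  induction r with
  | zero =>
      intro A L _ _ _ _ hph _
      exact ⟨A, Finset.Subset.refl A, Finset.subset_union_left, by omega, hph⟩
  | succ r ih =>
      intro A L hcard hord hlive hcross hph hLcard
      set c := Fintype.card G with hc
      have hL1 : 1 ≤ L.card := by
        have : 1 ≤ tB c M (r + 1) := by
          show 1 ≤ 2 ^ (2 ^ (M + 1) * c) * tB c M r + 1
          omega
        omega
      have hLne : L.Nonempty := Finset.card_pos.mp (by omega)
      set a := L.min' hLne with ha
      have haL : a ∈ L := L.min'_mem hLne
      set L' := L.erase a with hL'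
      have hL'card : L'.card = L.card - 1 := Finset.card_erase_of_mem haL
      have hanotA : a ∉ A := by
        intro h
        exact lt_irrefl a (hord a h a haL)
      set A1 := insert a A with hA1
      have hA1card : A1.card = A.card + 1 := Finset.card_insert_of_notMem hanotA
      set PSC := A1.powersetCard k with hPSC
      set τ : ℕ → Finset (Finset ℕ × G) :=
        fun x => PSC.image (fun S => (S, κ (insert x S))) with hτ
      set T2 : Finset (Finset (Finset ℕ × G)) := (PSC ×ˢ (Finset.univ : Finset G)).powerset
        with hT2
      have hmaps : ∀ x ∈ L', τ x ∈ T2 := by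
        intro x _
        simp only [hT2, Finset.mem_powerset]
        intro pr hpr
        obtain ⟨S, hS, rfl⟩ := Finset.mem_image.mp hpr
        exact Finset.mem_product.mpr ⟨hS, Finset.mem_univ _⟩
      have hPSCcard : PSC.card ≤ 2 ^ (M + 1) := by
        have h1 : PSC ⊆ A1.powerset := by
          intro S hS
          exact Finset.mem_powerset.mpr (Finset.mem_powersetCard.mp hS).1
        have h2 := Finset.card_le_card h1
        rw [Finset.card_powerset] at h2
        calc PSC.card ≤ 2 ^ A1.card := h2
          _ ≤ 2 ^ (M + 1) := Nat.pow_le_pow_right (by norm_num) (by omega)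
      have hT2card : T2.card ≤ 2 ^ (2 ^ (M + 1) * c) := by
        rw [hT2, Finset.card_powerset]
        apply Nat.pow_le_pow_right (by norm_num)
        rw [Finset.card_product]
        have : (Finset.univ : Finset G).card = c := rfl
        rw [this]
        exact Nat.mul_le_mul_right c hPSCcard
      have hT2ne : T2.Nonempty := ⟨∅, Finset.mem_powerset.mpr (Finset.empty_subset _)⟩
      have hmul : T2.card * tB c M r ≤ L'.card := by
        have h1 : tB c M (r + 1) = 2 ^ (2 ^ (M + 1) * c) * tB c M r + 1 := rfl
        have h2 : T2.card * tB c M r ≤ 2 ^ (2 ^ (M + 1) * c) * tB c M r :=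
          Nat.mul_le_mul_right _ hT2card
        omega
      obtain ⟨vtr, _, hfiber⟩ :=
        Finset.exists_le_card_fiber_of_mul_le_card_of_maps_to hmaps hT2ne hmul
      set Ln := L'.filter (fun x => τ x = vtr) with hLn
      have hLnsub : Ln ⊆ L := by
        intro x hx
        exact Finset.erase_subset _ _ (Finset.mem_filter.mp hx).1
      have htr : ∀ x ∈ Ln, ∀ y ∈ Ln, ∀ S, S ⊆ A1 → S.card = k →
          κ (insert x S) = κ (insert y S) := by
        intro x hx y hy S hS hSk
        have hτx : τ x = vtr := (Finset.mem_filter.mp hx).2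
        have hτy : τ y = vtr := (Finset.mem_filter.mp hy).2
        have hSP : S ∈ PSC := Finset.mem_powersetCard.mpr ⟨hS, hSk⟩
        have h1 : (S, κ (insert x S)) ∈ τ y := by
          rw [hτy, ← hτx]
          exact Finset.mem_image.mpr ⟨S, hSP, rfl⟩
        obtain ⟨S', _, heq⟩ := Finset.mem_image.mp h1
        have hS' : S' = S := congrArg Prod.fst heq
        have := congrArg Prod.snd heq
        simp only at this
        rw [hS'] at this
        exact this.symm
      -- new hypotheses for recursive call
      have hord1 : ∀ b ∈ A1, ∀ x ∈ Ln, b < x := by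
        intro b hb x hx
        have hxL' : x ∈ L' := (Finset.mem_filter.mp hx).1
        have hxa : x ≠ a := (Finset.mem_erase.mp hxL').1
        have hxL : x ∈ L := (Finset.mem_erase.mp hxL').2
        rcases Finset.mem_insert.mp hb with rfl | hb
        · exact lt_of_le_of_ne (Finset.min'_le L x hxL) (Ne.symm hxa)
        · exact hord b hb x hxL
      have hlive1 : ∀ S, S ⊆ A1 → S.card = k → ∀ b ∈ Ln, ∀ b' ∈ Ln,
          κ (insert b S) = κ (insert b' S) := by
        intro S hS hSk b hb b' hb'
        exact htr b hb b' hb' S hS hSk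
      have haLn : ∀ x ∈ Ln, a < x := by
        intro x hx
        have hxL' : x ∈ L' := (Finset.mem_filter.mp hx).1
        exact lt_of_le_of_ne (Finset.min'_le L x (Finset.mem_erase.mp hxL').2)
          (Ne.symm (Finset.mem_erase.mp hxL').1)
      have hSnotA : ∀ S, S ⊆ A1 → (∀ x ∈ S, x < a) → S ⊆ A := by
        intro S hS hxa x hx
        rcases Finset.mem_insert.mp (hS hx) with heq | h
        · exfalso
          have h2 := hxa _ hx
          rw [heq] at h2
          exact lt_irrefl _ h2
        · exact h
      have hcross1 : ∀ S, S ⊆ A1 → S.card = k → ∀ b ∈ A1, (∀ x ∈ S, x < b) →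
          ∀ x ∈ Ln, κ (insert b S) = κ (insert x S) := by
        intro S hS hSk b hb habove x hx
        rcases Finset.mem_insert.mp hb with rfl | hbA
        · -- b = a : then S ⊆ A, use old live-agreement with pair (a, x) in L
          have hSA : S ⊆ A := hSnotA S hS habove
          exact hlive S hSA hSk a haL x (hLnsub hx)
        · -- b ∈ A : S-elements < b < a so S ⊆ A, use old cross with x ∈ L
          have hba : b < a := hord b hbA a haL
          have hSA : S ⊆ A := hSnotA S hS (fun y hy => lt_trans (habove y hy) hba)
          exact hcross S hSA hSk b hbA habove x (hLnsub hx)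
      have hph1 : PreHom κ k A1 := by
        intro S hS hSk b hb b' hb' habove habove'
        rcases Finset.mem_insert.mp hb with rfl | hbA
        · rcases Finset.mem_insert.mp hb' with rfl | hb'A
          · rfl
          · -- b = a, b' ∈ A
            have hSA : S ⊆ A := hSnotA S hS habove
            exact (hcross S hSA hSk b' hb'A habove' a haL).symm
        · rcases Finset.mem_insert.mp hb' with rfl | hb'A
          · have hSA : S ⊆ A := hSnotA S hS habove'
            exact hcross S hSA hSk b hbA habove a haL
          · have hba : b < a := hord b hbA a haL
            have hSA : S ⊆ A := hSnotA S hS (fun y hy => lt_trans (habove y hy) hba)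
            exact hph S hSA hSk b hbA b' hb'A habove habove'
      have hLncard : tB c M r ≤ Ln.card := hfiber
      obtain ⟨A', hA1A', hA'sub, hA'card, hA'ph⟩ :=
        ih A1 Ln (by omega) hord1 hlive1 hcross1 hph1 hLncard
      refine ⟨A', (Finset.subset_insert a A).trans hA1A', ?_, by omega, hA'ph⟩
      intro x hx
      rcases Finset.mem_union.mp (hA'sub hx) with h | h
      · rcases Finset.mem_insert.mp h with rfl | h
        · exact Finset.mem_union_right _ haL
        · exact Finset.mem_union_left _ h
      · exact Finset.mem_union_right _ (hLnsub h)

theorem ramsey : ∀ (k s : ℕ) (κ : Finset ℕ → G) (X : Finset ℕ),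
    ramB k (Fintype.card G) s ≤ X.card →
    ∃ H, H ⊆ X ∧ H.card = s ∧
      (∀ T T' : Finset ℕ, T ⊆ H → T' ⊆ H → T.card = k → T'.card = k → κ T = κ T') := by
  intro k
  induction k with
  | zero =>
      intro s κ X hX
      obtain ⟨H, hH, hHc⟩ := Finset.exists_subset_card_eq hX
      refine ⟨H, hH, hHc, ?_⟩
      intro T T' _ _ hT hT'
      rw [Finset.card_eq_zero.mp hT, Finset.card_eq_zero.mp hT']
  | succ k ih =>
      intro s κ X hX
      set c := Fintype.card G with hc
      by_cases hk0 : k = 0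
      · -- arity 1 : pigeonhole
        subst hk0
        have hmul : (Finset.univ : Finset G).card * s ≤ X.card := by
          have h1 : ramB 1 c s = (c + 1) * (s + 1) + tB c (ramB 0 c s) (ramB 0 c s) := rfl
          have h3 : c * s ≤ (c + 1) * (s + 1) := by nlinarith
          calc (Finset.univ : Finset G).card * s = c * s := by rw [Finset.card_univ]
            _ ≤ (c + 1) * (s + 1) := h3
            _ ≤ ramB 1 c s := by rw [h1]; exact Nat.le_add_right _ _
            _ ≤ X.card := hX
        have hUne : (Finset.univ : Finset G).Nonempty := ⟨κ ∅, Finset.mem_univ _⟩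
        obtain ⟨y, _, hfib⟩ := Finset.exists_le_card_fiber_of_mul_le_card_of_maps_to
          (f := fun x => κ {x}) (fun x _ => Finset.mem_univ _) hUne hmul
        obtain ⟨H, hHsub, hHc⟩ :=
          Finset.exists_subset_card_eq hfib
        refine ⟨H, hHsub.trans (Finset.filter_subset _ _), hHc, ?_⟩
        intro T T' hT hT' hTc hT'c
        obtain ⟨x, rfl⟩ := Finset.card_eq_one.mp hTc
        obtain ⟨x', rfl⟩ := Finset.card_eq_one.mp hT'c
        have h1 : κ {x} = y :=
          (Finset.mem_filter.mp (hHsub (hT (Finset.mem_singleton_self x)))).2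
        have h2 : κ {x'} = y :=
          (Finset.mem_filter.mp (hHsub (hT' (Finset.mem_singleton_self x')))).2
        rw [h1, h2]
      · have hk : 1 ≤ k := by omega
        set M := ramB k c s with hM
        have htB : tB c M M ≤ X.card := by
          have h1 : ramB (k + 1) c s = (c + 1) * (s + 1) + tB c M M := rfl
          calc tB c M M ≤ (c + 1) * (s + 1) + tB c M M := Nat.le_add_left _ _
            _ = ramB (k + 1) c s := h1.symm
            _ ≤ X.card := hX
        obtain ⟨A', _, hA'X, hA'card, hA'ph⟩ := tree κ k M hk M ∅ X
          (by simp)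
          (by intro a ha; exact absurd ha (Finset.notMem_empty a))
          (by intro S hS hSk
              rw [Finset.subset_empty] at hS
              subst hS
              simp only [Finset.card_empty] at hSk
              exact absurd hSk (by omega))
          (by intro S hS hSk
              rw [Finset.subset_empty] at hS
              subst hS
              simp only [Finset.card_empty] at hSk
              exact absurd hSk (by omega))
          (by intro S hS hSk
              rw [Finset.subset_empty] at hS
              subst hS
              simp only [Finset.card_empty] at hSk
              exact absurd hSk (by omega))
          htB
        simp only [Finset.card_empty, zero_add] at hA'card
        have hA'X' : A' ⊆ X := by
          intro x hx
          rcases Finset.mem_union.mp (hA'X hx) with h | h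
          · exact absurd h (Finset.notMem_empty x)
          · exact h
        set γ : Finset ℕ → G := fun S =>
          if h : (A'.filter (fun b => ∀ x ∈ S, x < b)).Nonempty then
            κ (insert ((A'.filter (fun b => ∀ x ∈ S, x < b)).min' h) S)
          else κ S with hγ
        obtain ⟨H, hHA', hHcard, hHhom⟩ := ih s γ A' (by omega)
        refine ⟨H, hHA'.trans hA'X', hHcard, ?_⟩
        have hκγ : ∀ T, T ⊆ H → T.card = k + 1 →
            ∃ S, S ⊆ H ∧ S.card = k ∧ κ T = γ S := by
          intro T hTH hTc
          have hTne : T.Nonempty := Finset.card_pos.mp (by omega)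
          have hbT : T.max' hTne ∈ T := T.max'_mem hTne
          refine ⟨T.erase (T.max' hTne), (Finset.erase_subset _ _).trans hTH, ?_, ?_⟩
          · rw [Finset.card_erase_of_mem hbT, hTc]
            omega
          · set b := T.max' hTne with hbdef
            set S := T.erase b with hSdef
            have hSc : S.card = k := by
              rw [hSdef, Finset.card_erase_of_mem hbT, hTc]
              omega
            have hSsub : S ⊆ A' := fun x hx => hHA' (hTH (Finset.erase_subset _ _ hx))
            have hbA' : b ∈ A' := hHA' (hTH hbT)
            have habove : ∀ x ∈ S, x < b := by
              intro x hx
              have h1 := Finset.le_max' T x (Finset.mem_of_mem_erase hx)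
              exact lt_of_le_of_ne h1 (Finset.ne_of_mem_erase hx)
            have hne : (A'.filter (fun y => ∀ x ∈ S, x < y)).Nonempty :=
              ⟨b, Finset.mem_filter.mpr ⟨hbA', habove⟩⟩
            have hb0mem := Finset.mem_filter.mp
              ((A'.filter (fun y => ∀ x ∈ S, x < y)).min'_mem hne)
            have hγS : γ S = κ (insert ((A'.filter (fun y => ∀ x ∈ S, x < y)).min' hne) S) := by
              rw [hγ]
              simp only [dif_pos hne]
            have hph := hA'ph S hSsub hSc b hbA'
              ((A'.filter (fun y => ∀ x ∈ S, x < y)).min' hne) hb0mem.1 habove hb0mem.2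
            have hTins : insert b S = T := Finset.insert_erase hbT
            calc κ T = κ (insert b S) := by rw [hTins]
              _ = κ (insert ((A'.filter (fun y => ∀ x ∈ S, x < y)).min' hne) S) := hph
              _ = γ S := hγS.symm
        intro T T' hT hT' hTc hT'c
        obtain ⟨S1, hS1H, hS1c, he1⟩ := hκγ T hT hTc
        obtain ⟨S2, hS2H, hS2c, he2⟩ := hκγ T' hT' hT'c
        rw [he1, he2]
        exact hHhom S1 S2 hS1H hS2H hS1c hS2c


-- ### bounds

lemma T_succ_ge (x : ℕ) : fAck 3 x + 1 ≤ fAck 3 (x + 1) := by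
  rw [T_succ]
  exact Nat.lt_two_pow_self

lemma T_one : fAck 3 1 = 2 := by
  rw [show (1:ℕ) = 0 + 1 from rfl, T_succ, T_zero]; norm_num

lemma T_two : fAck 3 2 = 4 := by
  rw [show (2:ℕ) = 1 + 1 from rfl, T_succ, T_one]; norm_num

lemma T_three : fAck 3 3 = 16 := by
  rw [show (3:ℕ) = 2 + 1 from rfl, T_succ, T_two]; norm_num

lemma T_four : fAck 3 4 = 65536 := by
  rw [show (4:ℕ) = 3 + 1 from rfl, T_succ, T_three]; norm_num

lemma T_ge_four (x : ℕ) (h : 2 ≤ x) : 4 ≤ fAck 3 x := by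
  calc 4 = fAck 3 2 := T_two.symm
    _ ≤ fAck 3 x := T_mono h

lemma three_z_le_T (z : ℕ) (h : 4 ≤ z) : 3 * z + 1 ≤ fAck 3 z := by
  induction z with
  | zero => omega
  | succ n ih =>
      rcases Nat.lt_or_ge n 4 with h2 | h2
      · have hn : n = 3 := by omega
        subst hn
        rw [T_four]; omega
      · have h3 := ih h2
        have h4 : 2 ≤ fAck 3 n := by
          have := T_ge_four n (by omega); omega
        have h5 : 2 * fAck 3 n ≤ 2 ^ fAck 3 n := two_mul_le_two_pow _ h4
        rw [T_succ]
        omega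

lemma dfinB_le (d : ℕ) : dfinB d ≤ fAck 3 (3 * d) := by
  induction d with
  | zero => simp [dfinB, T_zero]
  | succ d ih =>
      have h1 : dfinB (d + 1) = dfinB d + 2 ^ 2 ^ dfinB d + 1 := rfl
      have e1 : fAck 3 (3 * d + 1) = 2 ^ fAck 3 (3 * d) := T_succ _
      have e2 : fAck 3 (3 * d + 2) = 2 ^ fAck 3 (3 * d + 1) := T_succ _
      have e3 : fAck 3 (3 * d + 3) = 2 ^ fAck 3 (3 * d + 2) := T_succ _
      have h2 : 2 ^ 2 ^ dfinB d ≤ fAck 3 (3 * d + 2) := by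
        rw [e2, e1]
        exact Nat.pow_le_pow_right (by omega : (0:ℕ) < 2)
          (Nat.pow_le_pow_right (by omega : (0:ℕ) < 2) ih)
      have h3 : dfinB d + 1 ≤ fAck 3 (3 * d + 2) := by
        have : dfinB d + 1 ≤ fAck 3 (3 * d) + 1 := by omega
        have h4 := T_succ_ge (3 * d)
        have h5 := T_succ_ge (3 * d + 1)
        have h6 := T_mono (show 3 * d + 1 ≤ 3 * d + 2 by omega)
        omega
      have h7 : 2 ≤ fAck 3 (3 * d + 2) := by
        have := T_ge_four (3 * d + 2) (by omega); omega
      have h8 : 2 * fAck 3 (3 * d + 2) ≤ 2 ^ fAck 3 (3 * d + 2) :=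
        two_mul_le_two_pow _ h7
      have : 3 * (d + 1) = 3 * d + 3 := by ring
      rw [this, e3]
      omega

lemma mdB_le (L : ℕ) : mdB L ≤ (fAck 3)^[2 * L] 1 := by
  induction L with
  | zero => simp [mdB]
  | succ L ih =>
      have h1 : mdB (L + 1) = dfinB (mdB L) + 1 := rfl
      rcases Nat.eq_zero_or_pos L with rfl | hL
      · rw [show 2 * (0 + 1) = 2 from rfl, T_iter_two]
        decide
      · set z := (fAck 3)^[2 * L] 1 with hz
        have hz4 : 4 ≤ z := by
          have e1 : (fAck 3)^[2] 1 ≤ (fAck 3)^[2 * L] 1 :=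
            T_iter_mono_left _ _ (by omega)
          rw [T_iter_two] at e1
          omega
        have hmz : mdB L ≤ z := ih
        have h2 : dfinB (mdB L) ≤ fAck 3 (3 * mdB L) := dfinB_le _
        have h3 : fAck 3 (3 * mdB L) ≤ fAck 3 (3 * z) := T_mono (by omega)
        have h4 : 3 * z + 1 ≤ fAck 3 z := three_z_le_T z hz4
        have h5 : fAck 3 (3 * z) + 1 ≤ fAck 3 (3 * z + 1) := T_succ_ge _
        have h6 : fAck 3 (3 * z + 1) ≤ fAck 3 (fAck 3 z) := T_mono h4
        have h7 : (fAck 3)^[2 * (L + 1)] 1 = fAck 3 (fAck 3 z) := by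
          rw [show 2 * (L + 1) = 2 * L + 1 + 1 from by ring]
          rw [Function.iterate_succ_apply', Function.iterate_succ_apply']
        omega

lemma tB_le (c M r : ℕ) : tB c M r ≤ (2 ^ (2 ^ (M + 1) * c + 1)) ^ r := by
  induction r with
  | zero => simp [tB]
  | succ r ih =>
      have h1 : tB c M (r + 1) = 2 ^ (2 ^ (M + 1) * c) * tB c M r + 1 := rfl
      set D := 2 ^ (2 ^ (M + 1) * c) with hD
      set B := 2 ^ (2 ^ (M + 1) * c + 1) with hB
      have hBD : B = 2 * D := by rw [hB, hD, pow_succ]; ring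
      have h2 : D * tB c M r ≤ D * B ^ r := Nat.mul_le_mul_left D ih
      have hD1 : 1 ≤ D := Nat.one_le_two_pow
      have hB1 : 1 ≤ B ^ r := Nat.one_le_pow _ _ (by positivity)
      have h3 : D * tB c M r + 1 ≤ D * B ^ r + D * B ^ r := by
        have : 1 ≤ D * B ^ r := Nat.one_le_iff_ne_zero.mpr (by positivity)
        omega
      calc tB c M (r + 1) = D * tB c M r + 1 := h1
        _ ≤ D * B ^ r + D * B ^ r := h3
        _ = 2 * D * B ^ r := by ring
        _ = B * B ^ r := by rw [hBD]
        _ = B ^ (r + 1) := by rw [pow_succ]; ring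

lemma ramB_le (k c s : ℕ) : ramB k c s ≤ (fun z => 2 ^ z)^[4 * k] (s + c + 4) := by
  induction k with
  | zero => simp only [ramB, Nat.mul_zero, Function.iterate_zero_apply]; omega
  | succ k ih =>
      set y := (fun z : ℕ => 2 ^ z)^[4 * k] (s + c + 4) with hy
      have hy4 : s + c + 4 ≤ y := le_E_iter _ _
      set M := ramB k c s with hM
      have hMy : M ≤ y := ih
      have h1 : ramB (k + 1) c s = (c + 1) * (s + 1) + tB c M M := rfl
      -- bound tB part
      have h2 : tB c M M ≤ 2 ^ ((2 ^ (M + 1) * c + 1) * M) := by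
        calc tB c M M ≤ (2 ^ (2 ^ (M + 1) * c + 1)) ^ M := tB_le c M M
          _ = 2 ^ ((2 ^ (M + 1) * c + 1) * M) := by rw [← pow_mul]
      have h3 : (2 ^ (M + 1) * c + 1) * M ≤ 2 ^ (2 * M + c + 1) := by
        have e1 : 2 ^ (M + 1) * c + 1 ≤ 2 ^ (M + 1) * (c + 1) := by
          have h01 : 1 ≤ 2 ^ (M + 1) := Nat.one_le_two_pow
          nlinarith
        have e2 : c + 1 ≤ 2 ^ c := (Nat.lt_two_pow_self (n := c))
        have e1' : 2 ^ (M + 1) * c + 1 ≤ 2 ^ (M + 1 + c) := by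
          calc 2 ^ (M + 1) * c + 1 ≤ 2 ^ (M + 1) * (c + 1) := e1
            _ ≤ 2 ^ (M + 1) * 2 ^ c := Nat.mul_le_mul_left _ e2
            _ = 2 ^ (M + 1 + c) := by rw [← pow_add]
        have e3 : M ≤ 2 ^ M := (Nat.lt_two_pow_self (n := M)).le
        calc (2 ^ (M + 1) * c + 1) * M ≤ 2 ^ (M + 1 + c) * 2 ^ M :=
              Nat.mul_le_mul e1' e3
          _ = 2 ^ (M + 1 + c + M) := by rw [← pow_add]
          _ = 2 ^ (2 * M + c + 1) := by ring_nf
      have hy1 : 4 ≤ y := by omega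
      have h4 : 2 * M + c + 1 ≤ 2 ^ y := by
        have : 2 * M + c + 1 ≤ 3 * y := by omega
        calc 2 * M + c + 1 ≤ 3 * y := this
          _ ≤ 2 ^ y := three_mul_le_two_pow y hy1
      have hE3 : (2:ℕ) ≤ 2 ^ (2 ^ (2 ^ y)) := by
        calc (2:ℕ) = 2 ^ 1 := rfl
          _ ≤ 2 ^ (2 ^ (2 ^ y)) := Nat.pow_le_pow_right (by omega : (0:ℕ) < 2)
              (Nat.one_le_two_pow)
      have h5 : tB c M M ≤ 2 ^ (2 ^ (2 ^ y)) := by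
        calc tB c M M ≤ 2 ^ ((2 ^ (M + 1) * c + 1) * M) := h2
          _ ≤ 2 ^ (2 ^ (2 * M + c + 1)) := Nat.pow_le_pow_right (by omega : (0:ℕ) < 2) h3
          _ ≤ 2 ^ (2 ^ (2 ^ y)) := Nat.pow_le_pow_right (by omega : (0:ℕ) < 2)
              (Nat.pow_le_pow_right (by omega : (0:ℕ) < 2) h4)
      have h6 : (c + 1) * (s + 1) ≤ 2 ^ (2 ^ (2 ^ y)) := by
        have e2 : c + 1 ≤ 2 ^ y :=
          le_trans ((Nat.lt_two_pow_self (n := c))) (Nat.pow_le_pow_right (by omega : (0:ℕ) < 2) (by omega))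
        have e3 : s + 1 ≤ 2 ^ y :=
          le_trans ((Nat.lt_two_pow_self (n := s))) (Nat.pow_le_pow_right (by omega : (0:ℕ) < 2) (by omega))
        have e4 : 2 * y ≤ 2 ^ y := two_mul_le_two_pow y (by omega)
        calc (c + 1) * (s + 1) ≤ 2 ^ y * 2 ^ y := Nat.mul_le_mul e2 e3
          _ = 2 ^ (2 * y) := by rw [← pow_add]; ring_nf
          _ ≤ 2 ^ (2 ^ y) := Nat.pow_le_pow_right (by omega : (0:ℕ) < 2) e4
          _ ≤ 2 ^ (2 ^ (2 ^ y)) := Nat.pow_le_pow_right (by omega : (0:ℕ) < 2)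
              (Nat.pow_le_pow_right (by omega : (0:ℕ) < 2) ((Nat.lt_two_pow_self).le))
      have h7 : ramB (k + 1) c s ≤ 2 ^ (2 ^ (2 ^ (2 ^ y))) := by
        have hsum : ramB (k + 1) c s ≤ 2 * 2 ^ (2 ^ (2 ^ y)) := by
          rw [h1]; omega
        calc ramB (k + 1) c s ≤ 2 * 2 ^ (2 ^ (2 ^ y)) := hsum
          _ ≤ 2 ^ (2 ^ (2 ^ (2 ^ y))) := two_mul_le_two_pow _ hE3
      have hE4 : (fun z : ℕ => 2 ^ z)^[4 * (k + 1)] (s + c + 4)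
          = 2 ^ (2 ^ (2 ^ (2 ^ y))) := by
        rw [show 4 * (k + 1) = 4 * k + 1 + 1 + 1 + 1 from by ring]
        rw [Function.iterate_succ_apply', Function.iterate_succ_apply',
          Function.iterate_succ_apply', Function.iterate_succ_apply']
      rw [hE4]
      exact h7

lemma dfinB_ge (d : ℕ) : 2 * d ≤ dfinB d := by
  induction d with
  | zero => simp
  | succ d ih =>
      have h1 : dfinB (d + 1) = dfinB d + 2 ^ 2 ^ dfinB d + 1 := rfl
      have h2 : 2 ≤ 2 ^ 2 ^ dfinB d := by
        calc (2:ℕ) = 2 ^ 1 := rfl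
          _ ≤ 2 ^ 2 ^ dfinB d := Nat.pow_le_pow_right (by omega : (0:ℕ) < 2) Nat.one_le_two_pow
      omega

lemma mdB_ge (L : ℕ) : L ≤ mdB L := by
  induction L with
  | zero => simp [mdB]
  | succ L ih =>
      have h1 : mdB (L + 1) = dfinB (mdB L) + 1 := rfl
      have h2 := dfinB_ge (mdB L)
      omega

lemma five_le_TT (K : ℕ) (hK : 3 ≤ K) : 5 * K + 2 ≤ fAck 3 (fAck 3 K) := by
  rcases Nat.lt_or_ge K 14 with h | h
  · have h1 : 4 ≤ fAck 3 K := T_ge_four K (by omega)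
    have h2 : fAck 3 4 ≤ fAck 3 (fAck 3 K) := T_mono h1
    rw [T_four] at h2
    omega
  · have h1 : K + 1 ≤ fAck 3 K := lt_T K
    have h2 : fAck 3 (K + 1) ≤ fAck 3 (fAck 3 K) := T_mono h1
    have h3 : 2 ^ (K + 1) ≤ fAck 3 (K + 1) := by
      rw [T_succ]
      exact Nat.pow_le_pow_right (by omega : (0:ℕ) < 2) (lt_T K)
    have h4 : 5 * K + 2 ≤ 2 ^ (K + 1) := by
      have h5 : 3 * K ≤ 2 ^ K := three_mul_le_two_pow _ (by omega)
      have h6 : 2 ^ (K + 1) = 2 ^ K * 2 := pow_succ 2 K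
      omega
    omega

lemma mdB_ge' (L : ℕ) (h : 1 ≤ L) : 2 * L - 1 ≤ mdB L := by
  obtain ⟨L', rfl⟩ := Nat.exists_eq_add_of_le h
  have h1 : mdB (1 + L') = mdB (L' + 1) := by rw [Nat.add_comm]
  have h2 : mdB (L' + 1) = dfinB (mdB L') + 1 := rfl
  have h3 := dfinB_ge (mdB L')
  have h4 := mdB_ge L'
  omega

/-- main numeric bound -/
lemma main_bound (m : ℕ) (hm : 2 ≤ m) :
    ramB (mdB (2 * m - 1)) (2 ^ (mdB (2 * m - 1))) (2 * mdB (2 * m - 1))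
      ≤ fAck 4 (6 * m - 3) := by
  set K := mdB (2 * m - 1) with hK
  have hK3 : 3 ≤ K := le_trans (by omega) (mdB_ge (2 * m - 1))
  have hK4 : 5 ≤ K := by
    have := mdB_ge' (2 * m - 1) (by omega)
    omega
  -- step 1 : ramB ≤ E^[4K] (2K + 2^K + 4)
  have h1 := ramB_le K (2 ^ K) (2 * K)
  -- step 2 : 2K + 2^K + 4 ≤ 2 ^ (K + 3)
  have h2 : 2 * K + 2 ^ K + 4 ≤ 2 ^ (K + 3) := by
    have e1 : 2 * K ≤ 2 ^ K := two_mul_le_two_pow K (by omega)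
    have e2 : 4 ≤ 2 ^ K := by
      calc (4:ℕ) = 2 ^ 2 := rfl
        _ ≤ 2 ^ K := Nat.pow_le_pow_right (by omega : (0:ℕ) < 2) (by omega)
    have e3 : 2 ^ (K + 3) = 8 * 2 ^ K := by rw [pow_add]; ring
    omega
  -- step 3 : 2 ^ (K + 3) ≤ T (K + 1)   (since K + 3 ≤ T K)
  have h3 : K + 3 ≤ fAck 3 K := by
    have e1 : 3 * K + 1 ≤ fAck 3 K := three_z_le_T K (by omega)
    omega
  have h4 : 2 ^ (K + 3) ≤ fAck 3 (K + 1) := by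
    rw [T_succ]
    exact Nat.pow_le_pow_right (by omega : (0:ℕ) < 2) h3
  -- combine : ramB ≤ E^[4K] (T (K+1)) = T (5K + 1)
  have h5 : ramB K (2 ^ K) (2 * K) ≤ fAck 3 (K + 1 + 4 * K) := by
    calc ramB K (2 ^ K) (2 * K) ≤ (fun z => 2 ^ z)^[4 * K] (2 * K + 2 ^ K + 4) := h1
      _ ≤ (fun z => 2 ^ z)^[4 * K] (fAck 3 (K + 1)) :=
          (E_mono.iterate (4 * K)) (le_trans h2 h4)
      _ = fAck 3 (K + 1 + 4 * K) := E_iter_T _ _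
  have h6 : K + 1 + 4 * K = 5 * K + 1 := by ring
  rw [h6] at h5
  -- 5K + 1 ≤ T (T K)
  have h7 := five_le_TT K hK3
  have h8 : fAck 3 (5 * K + 1) ≤ fAck 3 (fAck 3 (fAck 3 K)) := T_mono (by omega)
  -- K ≤ T^[2(2m-1)] 1
  have h9 : K ≤ (fAck 3)^[2 * (2 * m - 1)] 1 := mdB_le _
  have h10 : fAck 3 (fAck 3 (fAck 3 K)) ≤ (fAck 3)^[2 * (2 * m - 1) + 3] 1 := by
    have e1 : (fAck 3)^[2 * (2 * m - 1) + 3] 1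
        = fAck 3 (fAck 3 (fAck 3 ((fAck 3)^[2 * (2 * m - 1)] 1))) := by
      rw [show 2 * (2 * m - 1) + 3 = (2 * (2 * m - 1) + 1 + 1) + 1 from by ring]
      rw [Function.iterate_succ_apply', Function.iterate_succ_apply',
        Function.iterate_succ_apply']
    rw [e1]
    exact T_mono (T_mono (T_mono h9))
  have h11 : (fAck 3)^[2 * (2 * m - 1) + 3] 1 ≤ (fAck 3)^[6 * m - 3] 1 :=
    T_iter_mono_left _ _ (by omega)
  have h12 : fAck 4 (6 * m - 3) = (fAck 3)^[6 * m - 3] 1 := rfl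
  omega

-- ### the `t` smallest elements of a finite set
def botOf (T : Finset ℕ) (t : ℕ) : Finset ℕ :=
  T.filter (fun a => (T.filter (fun b => b < a)).card < t)

lemma botOf_union (A U : Finset ℕ) (h : ∀ a ∈ A, ∀ u ∈ U, a < u) :
    botOf (A ∪ U) A.card = A := by
  ext x
  simp only [botOf, Finset.mem_filter, Finset.mem_union]
  constructor
  · rintro ⟨hx1, hx2⟩
    by_cases hxA : x ∈ A
    · exact hxA
    · exfalso
      have hxU : x ∈ U := hx1.resolve_left hxA
      have hsub : A ⊆ (A ∪ U).filter (fun b => b < x) := by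
        intro a ha
        exact Finset.mem_filter.mpr ⟨Finset.mem_union_left _ ha, h a ha x hxU⟩
      have := Finset.card_le_card hsub
      omega
  · intro hxA
    refine ⟨Or.inl hxA, ?_⟩
    have hsub : (A ∪ U).filter (fun b => b < x) ⊆ A.erase x := by
      intro b hb
      obtain ⟨hb1, hb2⟩ := Finset.mem_filter.mp hb
      rcases Finset.mem_union.mp hb1 with hbA | hbU
      · exact Finset.mem_erase.mpr ⟨by omega, hbA⟩
      · exfalso
        have := h x hxA b hbU
        omega
    have h1 := Finset.card_le_card hsub
    have h2 : (A.erase x).card = A.card - 1 := Finset.card_erase_of_mem hxA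
    have h3 : 1 ≤ A.card := Finset.card_pos.mpr ⟨x, hxA⟩
    omega


end FK

open FK Finset in
/-- With `N = f₄(6m - 3)` from the Ackermann hierarchy, every 2-coloring of the nonempty
subsets of `{0,…,N-1}` admits a block sequence `(x_i)_{i<m}` of nonempty subsets of
`{0,…,N-1}` on whose combinatorial space the coloring is constant. -/
theorem folkman_bound (m : ℕ) (hm : 1 ≤ m) :
    ∀ N : ℕ, N = fAck 4 (6 * m - 3) →
    ∀ c : Finset ℕ → Fin 2,
      ∃ X : ℕ → Finset ℕ,
        (∀ i < m, (X i).Nonempty ∧ ∀ a ∈ X i, a < N) ∧ IsBlockSeqS m X ∧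
        ∀ x ∈ CombSpaceS m X, ∀ y ∈ CombSpaceS m X, c x = c y := by
  intro N hN c
  have hNpos : 1 ≤ N := by
    rw [hN, fAck4_eq]
    exact one_le_T_iter _
  rcases Nat.lt_or_ge m 2 with hm2 | hm2
  · -- m = 1 : trivial
    have hm1 : m = 1 := by omega
    subst hm1
    refine ⟨fun _ => {0}, ?_, ?_, ?_⟩
    · intro i _
      exact ⟨Finset.singleton_nonempty 0, by
        intro a ha
        rw [Finset.mem_singleton] at ha
        omega⟩
    · intro i j hij hj
      omega
    · have hcs : ∀ z ∈ CombSpaceS 1 (fun _ => ({0} : Finset ℕ)), z = {0} := by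
        rintro z ⟨s, hs, hlt, rfl⟩
        have hseq : s = {0} := by
          apply Finset.eq_singleton_iff_unique_mem.mpr
          obtain ⟨i, hi⟩ := hs
          have : i = 0 := by have := hlt i hi; omega
          exact ⟨this ▸ hi, fun x hx => by have := hlt x hx; omega⟩
        rw [hseq]
        simp
      intro x hx y hy
      rw [hcs x hx, hcs y hy]
  · -- main case m ≥ 2
    set L := 2 * m - 1 with hL
    set K := mdB L with hK
    have hK5 : 5 ≤ K := by
      have h1 := mdB_ge' L (by omega)
      omega
    -- Ramsey
    have hcardG : Fintype.card (Fin K → Fin 2) = 2 ^ K := by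
      rw [Fintype.card_fun]
      simp
    have hbound : ramB K (Fintype.card (Fin K → Fin 2)) (2 * K) ≤ (Finset.range N).card := by
      rw [hcardG, Finset.card_range, hN]
      exact main_bound m hm2
    set κ : Finset ℕ → (Fin K → Fin 2) := fun T => fun t => c (botOf T (t.1 + 1)) with hκ
    obtain ⟨H, hHsub, hHcard, hHom⟩ := ramsey K (2 * K) κ (Finset.range N) hbound
    set f := H.orderEmbOfFin hHcard with hf
    have hfmem : ∀ i, (f i : ℕ) ∈ H := fun i => H.orderEmbOfFin_mem hHcard i
    have hfinj : Function.Injective (fun i : Fin (2 * K) => (f i : ℕ)) := by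
      intro a b hab
      exact f.injective hab
    have hfmono : ∀ {a b : Fin (2 * K)}, a < b → (f a : ℕ) < f b := by
      intro a b hab
      exact f.strictMono hab
    set seg : ℕ → ℕ → Finset (Fin (2 * K)) :=
      fun a b => Finset.univ.filter (fun i => a ≤ i.1 ∧ i.1 < b) with hseg
    set fimg : Finset (Fin (2 * K)) → Finset ℕ := fun I => I.image (fun i => (f i : ℕ))
      with hfimg
    have hsegcard : ∀ a b, b ≤ 2 * K → (seg a b).card = b - a := by
      intro a b hb
      have h1 : (seg a b).image Fin.val = Finset.Ico a b := by
        ext j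
        simp only [hseg, Finset.mem_image, Finset.mem_filter, Finset.mem_univ, true_and,
          Finset.mem_Ico]
        constructor
        · rintro ⟨i, ⟨h1, h2⟩, rfl⟩
          exact ⟨h1, h2⟩
        · rintro ⟨h1, h2⟩
          exact ⟨⟨j, by omega⟩, ⟨h1, h2⟩, rfl⟩
      have h2 := Finset.card_image_of_injective (seg a b) (Fin.val_injective)
      rw [h1] at h2
      rw [← h2, Nat.card_Ico]
    have hfimgcard : ∀ I, (fimg I).card = I.card := by
      intro I
      exact Finset.card_image_of_injective I hfinj
    have hfimgsub : ∀ I, fimg I ⊆ H := by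
      intro I x hx
      obtain ⟨i, _, rfl⟩ := Finset.mem_image.mp hx
      exact hfmem i
    have hfimgmono : ∀ I J : Finset (Fin (2 * K)), I ⊆ J → fimg I ⊆ fimg J := by
      intro I J hIJ
      exact Finset.image_subset_image hIJ
    set botH := fimg (seg 0 K) with hbotH
    have hbotHcard : botH.card = K := by
      rw [hbotH, hfimgcard, hsegcard 0 K (by omega)]
      omega
    set γ : ℕ → Fin 2 := fun t => c (fimg (seg 0 t)) with hγ
    -- the key homogeneity consequence
    have hsame : ∀ S, S ⊆ botH → S.Nonempty → c S = γ S.card := by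
      intro S hSb hSne
      set t := S.card with ht
      have ht1 : 1 ≤ t := Finset.card_pos.mpr hSne
      have htK : t ≤ K := by
        rw [ht, ← hbotHcard]
        exact Finset.card_le_card hSb
      set U := fimg (seg (K + t) (2 * K)) with hU
      have hUcard : U.card = K - t := by
        rw [hU, hfimgcard, hsegcard _ _ (by omega)]
        omega
      -- elements of botH are below elements of U
      have hbotU : ∀ x ∈ botH, ∀ u ∈ U, x < u := by
        intro x hx u hu
        obtain ⟨i, hi, rfl⟩ := Finset.mem_image.mp hx
        obtain ⟨j, hj, rfl⟩ := Finset.mem_image.mp hu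
        simp only [hseg, Finset.mem_filter, Finset.mem_univ, true_and] at hi hj
        exact hfmono (by omega)
      have hSU : ∀ x ∈ S, ∀ u ∈ U, x < u := fun x hx => hbotU x (hSb hx)
      have hCsub : fimg (seg 0 t) ⊆ botH := by
        apply hfimgmono
        intro i hi
        simp only [hseg, Finset.mem_filter, Finset.mem_univ, true_and] at hi ⊢
        omega
      have hCU : ∀ x ∈ fimg (seg 0 t), ∀ u ∈ U, x < u := fun x hx => hbotU x (hCsub hx)
      have hCcard : (fimg (seg 0 t)).card = t := by
        rw [hfimgcard, hsegcard 0 t (by omega)]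
        omega
      -- both padded sets have K elements and lie in H
      have hdisjSU : Disjoint S U := by
        rw [Finset.disjoint_left]
        intro x hx hx'
        exact absurd (hSU x hx x hx') (lt_irrefl x)
      have hdisjCU : Disjoint (fimg (seg 0 t)) U := by
        rw [Finset.disjoint_left]
        intro x hx hx'
        exact absurd (hCU x hx x hx') (lt_irrefl x)
      have hTScard : (S ∪ U).card = K := by
        rw [Finset.card_union_of_disjoint hdisjSU, hUcard, ← ht]
        omega
      have hTCcard : ((fimg (seg 0 t)) ∪ U).card = K := by
        rw [Finset.card_union_of_disjoint hdisjCU, hUcard, hCcard]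
        omega
      have hTSsub : S ∪ U ⊆ H := by
        apply Finset.union_subset
        · exact (fun x hx => (hfimgsub _) (hSb hx))
        · exact hfimgsub _
      have hTCsub : (fimg (seg 0 t)) ∪ U ⊆ H := by
        apply Finset.union_subset (hfimgsub _) (hfimgsub _)
      have hhom := hHom (S ∪ U) ((fimg (seg 0 t)) ∪ U) hTSsub hTCsub hTScard hTCcard
      have hcomp := congrFun hhom ⟨t - 1, by omega⟩
      simp only [hκ] at hcomp
      have htt : t - 1 + 1 = t := by omega
      rw [htt] at hcomp
      have e1 : botOf (S ∪ U) t = S := by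
        have := botOf_union S U hSU
        rw [← ht] at this
        exact this
      have e2 : botOf ((fimg (seg 0 t)) ∪ U) t = fimg (seg 0 t) := by
        have := botOf_union (fimg (seg 0 t)) U hCU
        rw [hCcard] at this
        exact this
      rw [e1, e2] at hcomp
      exact hcomp
    -- min-determined disjoint systems via md
    obtain ⟨B, v, hBne, hBsub, hBdisj, hBkey⟩ := md L (fun S => γ S.card)
    -- pigeonhole on the 2 values of v
    have hpig : ∃ w : Fin 2, m - 1 <
        ((Finset.range L).filter (fun i => v i = w)).card := by
      have h1 : (Finset.univ : Finset (Fin 2)).card * (m - 1) < (Finset.range L).card := by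
        rw [Finset.card_univ, Fintype.card_fin, Finset.card_range]
        omega
      obtain ⟨w, _, hw⟩ := Finset.exists_lt_card_fiber_of_mul_lt_card_of_maps_to
        (f := v) (fun a _ => Finset.mem_univ (v a)) h1
      exact ⟨w, hw⟩
    obtain ⟨w, hw⟩ := hpig
    obtain ⟨J, hJsub, hJcard⟩ := Finset.exists_subset_card_eq
      (show m ≤ ((Finset.range L).filter (fun i => v i = w)).card by omega)
    have hJL : ∀ i ∈ J, i < L := by
      intro i hi
      have := hJsub hi
      exact Finset.mem_range.mp (Finset.mem_filter.mp this).1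
    have hJv : ∀ i ∈ J, v i = w := by
      intro i hi
      exact (Finset.mem_filter.mp (hJsub hi)).2
    set jf := J.orderEmbOfFin hJcard with hjf
    set jfn : ℕ → ℕ := fun j => if h : j < m then (jf ⟨j, h⟩ : ℕ) else 0 with hjfn
    have hjfnJ : ∀ j, j < m → jfn j ∈ J := by
      intro j hj
      simp only [hjfn, dif_pos hj]
      exact J.orderEmbOfFin_mem hJcard _
    have hjfninj : ∀ x, x < m → ∀ y, y < m → jfn x = jfn y → x = y := by
      intro x hx y hy hxy
      simp only [hjfn, dif_pos hx, dif_pos hy] at hxy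
      exact congrArg Fin.val (jf.injective hxy)
    set u : ℕ → ℕ := fun j => (B (jfn j)).card with hu
    set p : ℕ → ℕ := fun j => ∑ i ∈ Finset.range j, u i with hp
    have hpsucc : ∀ j, p (j + 1) = p j + u j := by
      intro j
      simp only [hp]
      rw [Finset.sum_range_succ]
    have hpmono : ∀ a b, a ≤ b → p a ≤ p b := by
      intro a b hab
      simp only [hp]
      exact Finset.sum_le_sum_of_subset (Finset.range_subset_range.mpr hab)
    have hu1 : ∀ j, j < m → 1 ≤ u j := by
      intro j hj
      simp only [hu]
      have h1 := hBne (jfn j) (hJL _ (hjfnJ j hj))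
      exact Finset.card_pos.mpr h1
    -- total size bound : p m ≤ K
    have hJimg : (Finset.range m).image jfn = J := by
      apply Finset.eq_of_subset_of_card_le
      · intro x hx
        obtain ⟨j, hj, rfl⟩ := Finset.mem_image.mp hx
        exact hjfnJ j (Finset.mem_range.mp hj)
      · rw [hJcard]
        rw [Finset.card_image_of_injOn]
        · rw [Finset.card_range]
        · intro x hx y hy hxy
          exact hjfninj x (Finset.mem_range.mp hx) y (Finset.mem_range.mp hy) hxy
    have hsumJ : ∀ s : Finset ℕ, (∀ j ∈ s, j < m) →
        ((s.image jfn).biUnion B).card = ∑ j ∈ s, u j := by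
      intro s hsm
      have hinj : ∀ x ∈ s, ∀ y ∈ s, jfn x = jfn y → x = y := by
        intro x hx y hy
        exact hjfninj x (hsm x hx) y (hsm y hy)
      rw [Finset.card_biUnion]
      · rw [Finset.sum_image hinj]
      · intro x hx y hy hxy
        exact hBdisj x y hxy
    have hpm : p m ≤ K := by
      have h1 : ((Finset.range m).image jfn).biUnion B ⊆ Finset.range K := by
        intro x hx
        obtain ⟨i, _, hx⟩ := Finset.mem_biUnion.mp hx
        exact hBsub i hx
      have h2 := Finset.card_le_card h1
      rw [Finset.card_range] at h2
      have h3 := hsumJ (Finset.range m) (fun j hj => Finset.mem_range.mp hj)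
      simp only [hp]
      omega
    -- the blocks
    set X : ℕ → Finset ℕ := fun j => fimg (seg (p j) (p (j + 1))) with hX
    have hXcard : ∀ j, j < m → (X j).card = u j := by
      intro j hj
      rw [hX]
      have h1 : p (j + 1) ≤ 2 * K := by
        have := hpmono (j + 1) m (by omega)
        omega
      rw [hfimgcard, hsegcard _ _ h1, hpsucc]
      omega
    refine ⟨X, ?_, ?_, ?_⟩
    · intro i hi
      constructor
      · rw [← Finset.card_pos, hXcard i hi]
        exact hu1 i hi
      · intro a ha
        have h1 : a ∈ H := hfimgsub _ ha
        exact Finset.mem_range.mp (hHsub h1)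
    · intro i j hij hj
      intro a ha b hb
      simp only [hX] at ha hb
      obtain ⟨α, hα, rfl⟩ := Finset.mem_image.mp ha
      obtain ⟨β, hβ, rfl⟩ := Finset.mem_image.mp hb
      simp only [hseg, Finset.mem_filter, Finset.mem_univ, true_and] at hα hβ
      have h1 : p (i + 1) ≤ p j := hpmono _ _ (by omega)
      exact hfmono (by omega)
    · -- constancy on the combinatorial space
      have hconst : ∀ z ∈ CombSpaceS m X, c z = w := by
        rintro z ⟨s, hsne, hsm, rfl⟩
        set Iset := s.biUnion (fun j => seg (p j) (p (j + 1))) with hIset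
        have hz : s.biUnion X = fimg Iset := by
          ext x
          constructor
          · intro hx
            obtain ⟨j, hj, hx⟩ := Finset.mem_biUnion.mp hx
            obtain ⟨i, hi, rfl⟩ := Finset.mem_image.mp hx
            exact Finset.mem_image.mpr ⟨i, Finset.mem_biUnion.mpr ⟨j, hj, hi⟩, rfl⟩
          · intro hx
            obtain ⟨i, hi, rfl⟩ := Finset.mem_image.mp hx
            obtain ⟨j, hj, hij⟩ := Finset.mem_biUnion.mp hi
            exact Finset.mem_biUnion.mpr ⟨j, hj, Finset.mem_image.mpr ⟨i, hij, rfl⟩⟩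
        have hIcard : Iset.card = ∑ j ∈ s, u j := by
          rw [hIset]
          rw [Finset.card_biUnion]
          · apply Finset.sum_congr rfl
            intro j hj
            have h1 : p (j + 1) ≤ 2 * K := by
              have := hpmono (j + 1) m (hsm j hj)
              omega
            rw [hsegcard _ _ h1, hpsucc]
            omega
          · intro x hx y hy hxy
            rw [Function.onFun, Finset.disjoint_left]
            intro i hi hi'
            simp only [hseg, Finset.mem_filter, Finset.mem_univ, true_and] at hi hi'
            rcases Nat.lt_or_ge x y with h | h
            · have := hpmono (x + 1) y (by omega)
              omega
            · have hyx : y < x := by omega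
              have := hpmono (y + 1) x (by omega)
              omega
        have hIsub : Iset ⊆ seg 0 K := by
          rw [hIset]
          intro i hi
          obtain ⟨j, hj, hij⟩ := Finset.mem_biUnion.mp hi
          simp only [hseg, Finset.mem_filter, Finset.mem_univ, true_and] at hij ⊢
          have h1 : p (j + 1) ≤ p m := hpmono _ _ (hsm j hj)
          omega
        have hzsub : s.biUnion X ⊆ botH := by
          rw [hz, hbotH]
          exact hfimgmono _ _ hIsub
        have hzne : (s.biUnion X).Nonempty := by
          obtain ⟨j, hj⟩ := hsne
          obtain ⟨x, hx⟩ : (X j).Nonempty := by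
            rw [← Finset.card_pos, hXcard j (hsm j hj)]
            exact hu1 j (hsm j hj)
          exact ⟨x, Finset.mem_biUnion.mpr ⟨j, hj, hx⟩⟩
        have hzcard : (s.biUnion X).card = ∑ j ∈ s, u j := by
          rw [hz, hfimgcard, hIcard]
        -- color via hsame
        have h1 : c (s.biUnion X) = γ (∑ j ∈ s, u j) := by
          rw [hsame _ hzsub hzne, hzcard]
        -- md gives the value w
        set sJ := s.image jfn with hsJ
        have hsJne : sJ.Nonempty := hsne.image _
        have hsJL : ∀ i ∈ sJ, i < L := by
          intro i hi
          obtain ⟨j, hj, rfl⟩ := Finset.mem_image.mp hi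
          exact hJL _ (hjfnJ j (hsm j hj))
        have h2 := hBkey sJ hsJne hsJL
        have h3 : v (sJ.min' hsJne) = w := by
          apply hJv
          have := sJ.min'_mem hsJne
          obtain ⟨j, hj, hjeq⟩ := Finset.mem_image.mp this
          rw [← hjeq]
          exact hjfnJ j (hsm j hj)
        have h4 : (sJ.biUnion B).card = ∑ j ∈ s, u j := hsumJ s hsm
        have h5 : γ ((sJ.biUnion B).card) = w := by
          rw [← h3, ← h2]
        rw [h4] at h5
        rw [h1, h5]
      intro x hx y hy
      rw [hconst x hx, hconst y hy]
end

section
/- For all real numbers C, ε > 0 and every natural number m ≥ 1 there is a natural number n such that for every C-Lipschitz function f : PS_{ℓ_∞^n} → ℝ defined on the positive unit sphere of ℓ_∞^n, there is a normalized positive block sequence (y_i)_{i<m} of vectors of ℓ_∞^n such that osc(f ↾ PS_{[y_i]_{i<m}}) < ε, where PS_{[y_i]_{i<m}} is the set of positive norm-one vectors in the linear span of (y_i)_{i<m}. -/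
open Filter Set

attribute [local instance] Ultrafilter.mul Ultrafilter.semigroup

/-- Type copy of `ℕ → ℕ` carrying the pointwise-max semigroup structure. -/
def Blk : Type := ℕ → ℕ

namespace Blk

instance : Semigroup Blk where
  mul f g := fun i => max (f i) (g i)
  mul_assoc _ _ _ := funext fun _ => max_assoc _ _ _

lemma mul_apply (f g : Blk) (i : ℕ) : (f * g) i = max (f i) (g i) := rfl

lemma mul_comm' (f g : Blk) : f * g = g * f := funext fun i => max_comm _ _

/-- bottom element -/
def bot : Blk := fun _ => 0

lemma bot_mul (f : Blk) : bot * f = f := funext fun i => Nat.zero_max (f i)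
lemma mul_bot (f : Blk) : f * bot = f := funext fun i => Nat.max_zero (f i)

/-- the tetris operation -/
def T : Blk → Blk := fun f => (fun i => f i - 1 : ℕ → ℕ)

lemma T_apply (f : Blk) (i : ℕ) : T f i = f i - 1 := rfl

lemma Tpow_apply (d : ℕ) (f : Blk) (i : ℕ) : (T^[d] f) i = f i - d := by
  induction d generalizing f with
  | zero => rfl
  | succ d ih =>
    rw [Function.iterate_succ_apply, ih (T f), T_apply]
    omega

lemma T_mul (f g : Blk) : T (f * g) = T f * T g := by
  funext i
  show (f*g) i - 1 = max (f i - 1) (g i - 1)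
  rw [mul_apply]; omega

lemma Tpow_mul (d : ℕ) (f g : Blk) : T^[d] (f * g) = T^[d] f * T^[d] g := by
  funext i
  show (T^[d] (f*g)) i = max ((T^[d] f) i) ((T^[d] g) i)
  simp only [Tpow_apply, mul_apply]
  omega

/-- successor reparametrization -/
def sig : Blk → Blk := fun f => (fun i => if f i = 0 then 0 else f i + 1 : ℕ → ℕ)

lemma sig_apply (f : Blk) (i : ℕ) : sig f i = if f i = 0 then 0 else f i + 1 := rfl

lemma T_sig (f : Blk) : T (sig f) = f := by
  funext i
  show (sig f) i - 1 = f i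
  rw [sig_apply]; split <;> omega

lemma sig_mul (f g : Blk) : sig (f * g) = sig f * sig g := by
  funext i
  show sig (f*g) i = max (sig f i) (sig g i)
  simp only [sig_apply, mul_apply]
  split_ifs <;> omega

/-- support -/
def supp (f : Blk) : Set ℕ := {i | f i ≠ 0}

/-- `Fine j`: finitely supported, values `≤ j`, attaining `j`. -/
def Fine (j : ℕ) : Set Blk := {q | (supp q).Finite ∧ (∀ i, q i ≤ j) ∧ ∃ i, q i = j}

/--支持 beyond N -/
def Bd (N : ℕ) : Set Blk := {q | ∀ i ≤ N, q i = 0}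

lemma bot_mem_Fine : bot ∈ Fine 0 :=
  ⟨Set.Finite.subset (Set.finite_empty) (by intro i hi; exact hi rfl), fun _ => le_refl 0, ⟨0, rfl⟩⟩

lemma bot_mem_Bd (N : ℕ) : bot ∈ Bd N := fun _ _ => rfl

lemma Fine_zero_subset : Fine 0 ⊆ {bot} := by
  rintro q ⟨_, hle, _⟩
  have : q = bot := funext fun i => Nat.le_zero.mp (hle i)
  simp [this]

lemma mul_mem_Fine {a b : ℕ} {q r : Blk} (hq : q ∈ Fine a) (hr : r ∈ Fine b) :
    q * r ∈ Fine (max a b) := by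
  obtain ⟨hf1, hle1, i1, hi1⟩ := hq
  obtain ⟨hf2, hle2, i2, hi2⟩ := hr
  refine ⟨?_, fun i => ?_, ?_⟩
  · apply Set.Finite.subset (hf1.union hf2)
    intro i hi
    rw [supp, Set.mem_setOf_eq, mul_apply] at hi
    rcases Nat.eq_zero_or_pos (q i) with h | h
    · exact Or.inr (by simp [supp, Set.mem_setOf_eq]; omega)
    · exact Or.inl (by simp [supp, Set.mem_setOf_eq]; omega)
  · rw [mul_apply]
    exact max_le_max (hle1 i) (hle2 i)
  · rcases le_total a b with h | h
    · exact ⟨i2, by rw [mul_apply]; have := hle1 i2; omega⟩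
    · exact ⟨i1, by rw [mul_apply]; have := hle2 i1; omega⟩

lemma mul_mem_Bd {N : ℕ} {q r : Blk} (hq : q ∈ Bd N) (hr : r ∈ Bd N) : q * r ∈ Bd N := by
  intro i hi
  rw [mul_apply, hq i hi, hr i hi]
  omega

lemma Tpow_mem_Fine {j d : ℕ} (hd : d ≤ j) {q : Blk} (hq : q ∈ Fine j) :
    T^[d] q ∈ Fine (j - d) := by
  obtain ⟨hf, hle, i0, hi0⟩ := hq
  refine ⟨?_, fun i => ?_, ⟨i0, ?_⟩⟩
  · apply Set.Finite.subset hf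
    intro i hi
    rw [supp, Set.mem_setOf_eq, Tpow_apply] at hi
    simp [supp, Set.mem_setOf_eq]; omega
  · rw [Tpow_apply]; have := hle i; omega
  · rw [Tpow_apply]; omega

lemma Tpow_mem_Bd {N d : ℕ} {q : Blk} (hq : q ∈ Bd N) : T^[d] q ∈ Bd N := by
  intro i hi
  rw [Tpow_apply, hq i hi]
  omega

lemma sig_mem_Fine {j : ℕ} (hj : 1 ≤ j) {q : Blk} (hq : q ∈ Fine j) : sig q ∈ Fine (j + 1) := by
  obtain ⟨hf, hle, i0, hi0⟩ := hq
  refine ⟨?_, fun i => ?_, ⟨i0, ?_⟩⟩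
  · apply Set.Finite.subset hf
    intro i hi
    rw [supp, Set.mem_setOf_eq, sig_apply] at hi
    simp [supp, Set.mem_setOf_eq]
    intro h; rw [h] at hi; simp at hi
  · rw [sig_apply]; have := hle i; split <;> omega
  · rw [sig_apply]; split <;> omega

lemma sig_mem_Bd {N : ℕ} {q : Blk} (hq : q ∈ Bd N) : sig q ∈ Bd N := by
  intro i hi
  rw [sig_apply, hq i hi]; simp

/-! ### Ultrafilter algebra -/

lemma mem_mul {U V : Ultrafilter Blk} {A : Set Blk} :
    A ∈ U * V ↔ {m : Blk | {m' : Blk | m * m' ∈ A} ∈ V} ∈ U := Iff.rfl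

lemma mul_mem_of {U V : Ultrafilter Blk} {P Q R : Set Blk} (hP : P ∈ U) (hQ : Q ∈ V)
    (h : ∀ p ∈ P, ∀ q ∈ Q, p * q ∈ R) : R ∈ U * V := by
  rw [mem_mul]
  apply Filter.mem_of_superset hP
  intro p hp
  exact Filter.mem_of_superset hQ (fun q hq => h p hp q hq)

lemma eq_pure_of_singleton_mem {U : Ultrafilter Blk} {x : Blk} (h : {x} ∈ U) : U = pure x := by
  apply Ultrafilter.coe_inj.mp
  apply Filter.ext
  intro A
  simp only [Ultrafilter.mem_coe, Filter.mem_pure]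
  constructor
  · intro hA
    have := (U.inter_mem hA h)
    obtain ⟨z, hz1, hz2⟩ := Ultrafilter.nonempty_of_mem this
    rwa [Set.mem_singleton_iff.mp hz2] at hz1
  · intro hx
    exact Filter.mem_of_superset h (by simpa using hx)

lemma pure_bot_mul (V : Ultrafilter Blk) : (pure bot : Ultrafilter Blk) * V = V := by
  apply Ultrafilter.coe_inj.mp
  apply Filter.ext
  intro A
  rw [Ultrafilter.mem_coe, mem_mul]
  simp only [Ultrafilter.mem_pure, Set.mem_setOf_eq, bot_mul, Ultrafilter.mem_coe]
  exact Iff.rfl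

lemma mul_pure_bot (V : Ultrafilter Blk) : V * (pure bot : Ultrafilter Blk) = V := by
  apply Ultrafilter.coe_inj.mp
  apply Filter.ext
  intro A
  rw [Ultrafilter.mem_coe, mem_mul]
  simp only [Ultrafilter.mem_pure, Set.mem_setOf_eq, mul_bot, Ultrafilter.mem_coe]
  exact Iff.rfl

lemma map_mul_of_hom {g : Blk → Blk} (hg : ∀ x y, g (x * y) = g x * g y)
    (U V : Ultrafilter Blk) : (U * V).map g = U.map g * V.map g := by
  apply Ultrafilter.coe_inj.mp
  apply Filter.ext
  intro A
  rw [Ultrafilter.mem_coe, Ultrafilter.mem_coe, Ultrafilter.mem_map, mem_mul, mem_mul,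
    Ultrafilter.mem_map]
  have hEq : (g ⁻¹' {m : Blk | {m' : Blk | m * m' ∈ A} ∈ V.map g}) =
      {m : Blk | {m' : Blk | m * m' ∈ g ⁻¹' A} ∈ V} := by
    ext x
    simp only [Set.mem_preimage, Set.mem_setOf_eq, Ultrafilter.mem_map]
    have : (g ⁻¹' {m' : Blk | g x * m' ∈ A}) = {m' : Blk | x * m' ∈ g ⁻¹' A} := by
      ext y
      simp only [Set.mem_preimage, Set.mem_setOf_eq, hg]
    rw [this]
    exact Iff.rfl
  rw [hEq]

lemma continuous_umap (g : Blk → Blk) : Continuous (Ultrafilter.map g) := by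
  apply ultrafilterBasis_is_basis.continuous_iff.2
  intro s hs
  rcases hs with ⟨t, rfl⟩
  have : Ultrafilter.map g ⁻¹' {u : Ultrafilter Blk | t ∈ u} = {u : Ultrafilter Blk | g ⁻¹' t ∈ u} := by
    ext u; simp [Ultrafilter.mem_map]
  rw [this]
  exact ultrafilter_isOpen_basic _

end Blk

namespace Blk

/-- Cohesiveness predicate for a sequence of ultrafilters up to level `k`. -/
def Cohesive (k : ℕ) (e : ℕ → Ultrafilter Blk) : Prop :=
  (∀ j, j ≤ k → Fine j ∈ e j ∧ (∀ N, Bd N ∈ e j) ∧ e j * e j = e j) ∧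
  (∀ j, j + 1 ≤ k → (e (j+1)).map T = e j) ∧
  (∀ i j, i ≤ j → j ≤ k → e i * e j = e j ∧ e j * e i = e j)

lemma cohesive_zero_eq_pure {k : ℕ} {e : ℕ → Ultrafilter Blk} (h : Cohesive k e) :
    e 0 = pure bot :=
  eq_pure_of_singleton_mem (Filter.mem_of_superset ((h.1 0 (Nat.zero_le k)).1) Fine_zero_subset)

lemma T_bot : T bot = bot := rfl

/-- staircase generator -/
def stair (N : ℕ) : Blk := (fun i => if i = N + 1 then 1 else 0 : ℕ → ℕ)

lemma stair_mem_Fine (N : ℕ) : stair N ∈ Fine 1 := by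
  refine ⟨Set.Finite.subset (Set.finite_singleton (N+1)) ?_, fun i => ?_, ⟨N+1, ?_⟩⟩
  · intro i hi
    rw [supp, Set.mem_setOf_eq] at hi
    rw [Set.mem_singleton_iff]
    by_contra hne
    exact hi (by simp [stair, hne])
  · simp only [stair]; split <;> omega
  · simp [stair]

lemma stair_mem_Bd {N M : ℕ} (h : M ≤ N) : stair N ∈ Bd M := by
  intro i hi
  simp only [stair]
  split <;> omega

lemma T_stair (N : ℕ) : T (stair N) = bot := by
  funext i
  show stair N i - 1 = 0
  simp only [stair]; split <;> omega

theorem exists_cohesive (k : ℕ) : ∃ e : ℕ → Ultrafilter Blk, Cohesive k e := by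
  induction k with
  | zero =>
    refine ⟨fun _ => pure bot, ⟨?_, by omega, ?_⟩⟩
    · intro j hj
      interval_cases j
      exact ⟨by simpa using bot_mem_Fine, fun N => by simpa using bot_mem_Bd N, pure_bot_mul _⟩
    · intro i j hi hj
      interval_cases j
      interval_cases i
      exact ⟨pure_bot_mul _, pure_bot_mul _⟩
  | succ k ih =>
    obtain ⟨e, he⟩ := ih
    have hek_idem : e k * e k = e k := (he.1 k le_rfl).2.2
    have hek_fine : Fine k ∈ e k := (he.1 k le_rfl).1
    have hek_bd : ∀ N, Bd N ∈ e k := (he.1 k le_rfl).2.1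
    have hmapTk : (e k).map T * e k = e k := by
      rcases Nat.eq_zero_or_pos k with hk0 | hkpos
      · subst hk0
        rw [cohesive_zero_eq_pure he]
        rw [show (pure bot : Ultrafilter Blk).map T = pure bot by
          rw [Ultrafilter.map_pure, T_bot]]
        exact pure_bot_mul _
      · have h1 : (e k).map T = e (k-1) := by
          have := he.2.1 (k-1) (by omega)
          rwa [show k - 1 + 1 = k by omega] at this
        rw [h1]
        exact (he.2.2 (k-1) k (by omega) le_rfl).1
    set S : Set (Ultrafilter Blk) :=
      {x | Fine (k+1) ∈ x ∧ (∀ N, Bd N ∈ x) ∧ x.map T = e k ∧ x * e k = x} with hS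
    have hmulS : ∀ x ∈ S, ∀ y ∈ S, x * y ∈ S := by
      rintro x ⟨hx1, hx2, hx3, hx4⟩ y ⟨hy1, hy2, hy3, hy4⟩
      refine ⟨?_, fun N => ?_, ?_, ?_⟩
      · apply mul_mem_of hx1 hy1
        intro p hp q hq
        have h := mul_mem_Fine hp hq
        rwa [max_self] at h
      · exact mul_mem_of (hx2 N) (hy2 N) (fun p hp q hq => mul_mem_Bd hp hq)
      · rw [map_mul_of_hom T_mul, hx3, hy3, hek_idem]
      · rw [mul_assoc, hy4]
    have hSne : S.Nonempty := by
      rcases Nat.eq_zero_or_pos k with hk0 | hkpos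
      · subst hk0
        have hx : ∀ P : Set Blk, (∀ᶠ N in Filter.atTop, stair N ∈ P) →
            P ∈ Ultrafilter.of (Filter.map stair Filter.atTop) :=
          fun P h => (Ultrafilter.of_le _) (Filter.mem_map.mpr h)
        refine ⟨Ultrafilter.of (Filter.map stair Filter.atTop), ?_, fun N => ?_, ?_, ?_⟩
        · exact hx _ (Filter.Eventually.of_forall (fun N => stair_mem_Fine N))
        · apply hx
          filter_upwards [Filter.eventually_ge_atTop N] with M hM
          exact stair_mem_Bd hM
        · rw [cohesive_zero_eq_pure he]
          apply eq_pure_of_singleton_mem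
          rw [Ultrafilter.mem_map]
          apply hx
          apply Filter.Eventually.of_forall
          intro N
          show T (stair N) ∈ ({bot} : Set Blk)
          rw [T_stair]
          rfl

        · rw [cohesive_zero_eq_pure he]
          exact mul_pure_bot _
      · refine ⟨(e k).map sig * e k, ?_, fun N => ?_, ?_, ?_⟩
        · apply mul_mem_of (show Fine (k+1) ∈ (e k).map sig from ?_) hek_fine ?_
          · rw [Ultrafilter.mem_map]
            exact Filter.mem_of_superset hek_fine (fun q hq => sig_mem_Fine hkpos hq)
          · intro p hp q hq
            have h := mul_mem_Fine hp hq
            rwa [max_eq_left (by omega)] at h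
        · apply mul_mem_of (show Bd N ∈ (e k).map sig from ?_) (hek_bd N)
            (fun p hp q hq => mul_mem_Bd hp hq)
          rw [Ultrafilter.mem_map]
          exact Filter.mem_of_superset (hek_bd N) (fun q hq => sig_mem_Bd hq)
        · rw [map_mul_of_hom T_mul]
          have h2 : ((e k).map sig).map T = e k := by
            rw [Ultrafilter.map_map]
            have : T ∘ sig = id := funext T_sig
            rw [this, Ultrafilter.map_id]
          rw [h2]
          have h1 : (e k).map T = e (k-1) := by
            have := he.2.1 (k-1) (by omega)
            rwa [show k - 1 + 1 = k by omega] at this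
          rw [h1]
          exact (he.2.2 (k-1) k (by omega) le_rfl).2
        · rw [mul_assoc, hek_idem]
    have hScl : IsClosed S := by
      have : S = {x : Ultrafilter Blk | Fine (k+1) ∈ x} ∩
          ((⋂ N, {x : Ultrafilter Blk | Bd N ∈ x}) ∩
          ({x : Ultrafilter Blk | x.map T = e k} ∩ {x : Ultrafilter Blk | x * e k = x})) := by
        ext x
        simp only [hS, Set.mem_setOf_eq, Set.mem_inter_iff, Set.mem_iInter]
        try tauto
      rw [this]
      refine IsClosed.inter (ultrafilter_isClosed_basic _) (IsClosed.inter ?_ (IsClosed.inter ?_ ?_))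
      · exact isClosed_iInter (fun N => ultrafilter_isClosed_basic _)
      · exact isClosed_eq (continuous_umap T) continuous_const
      · exact isClosed_eq (Ultrafilter.continuous_mul_left (e k)) continuous_id
    obtain ⟨u, huS, huu⟩ := exists_idempotent_in_compact_subsemigroup
      Ultrafilter.continuous_mul_left S hSne hScl.isCompact hmulS
    obtain ⟨hu1, hu2, hu3, hu4⟩ := huS
    set E : Ultrafilter Blk := e k * u with hE
    have f5 : E * E = E := by
      rw [hE, mul_assoc, ← mul_assoc u (e k) u, hu4, huu]
    have f6 : E.map T = e k := by
      rw [hE, map_mul_of_hom T_mul, hu3, hmapTk]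
    have f1 : Fine (k+1) ∈ E := by
      apply mul_mem_of hek_fine hu1
      intro p hp q hq
      have h := mul_mem_Fine hp hq
      rwa [max_eq_right (by omega)] at h
    have f2 : ∀ N, Bd N ∈ E := fun N =>
      mul_mem_of (hek_bd N) (hu2 N) (fun p hp q hq => mul_mem_Bd hp hq)
    have fuei : ∀ i, i ≤ k → u * e i = u := by
      intro i hi
      calc u * e i = (u * e k) * e i := by rw [hu4]
      _ = u * (e k * e i) := by rw [mul_assoc]
      _ = u * e k := by rw [(he.2.2 i k hi le_rfl).2]
      _ = u := hu4
    have f7 : ∀ i, i ≤ k → e i * E = E := by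
      intro i hi
      rw [hE, ← mul_assoc, (he.2.2 i k hi le_rfl).1]
    have f8 : ∀ i, i ≤ k → E * e i = E := by
      intro i hi
      rw [hE, mul_assoc, fuei i hi]
    refine ⟨Function.update e (k+1) E, ⟨?_, ?_, ?_⟩⟩
    · intro j hj
      rcases Nat.lt_or_ge j (k+1) with h | h
      · rw [Function.update_of_ne (by omega)]
        exact he.1 j (by omega)
      · have hjk : j = k + 1 := by omega
        subst hjk
        rw [Function.update_self]
        exact ⟨f1, f2, f5⟩
    · intro j hj
      rcases Nat.lt_or_ge (j+1) (k+1) with h | h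
      · rw [Function.update_of_ne (by omega), Function.update_of_ne (by omega)]
        exact he.2.1 j (by omega)
      · have hjk : j = k := by omega
        subst hjk
        rw [Function.update_self, Function.update_of_ne (by omega), f6]
    · intro i j hij hj
      rcases Nat.lt_or_ge j (k+1) with h | h
      · rw [Function.update_of_ne (by omega), Function.update_of_ne (by omega)]
        exact he.2.2 i j hij (by omega)
      · have hjk : j = k + 1 := by omega
        subst hjk
        rw [Function.update_self]
        rcases Nat.lt_or_ge i (k+1) with h' | h'
        · rw [Function.update_of_ne (by omega)]
          exact ⟨f7 i (by omega), f8 i (by omega)⟩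
        · have hik : i = k + 1 := by omega
          subst hik
          rw [Function.update_self]
          exact ⟨f5, f5⟩

end Blk

namespace Blk

/-- a single term of a combination: a tetris image of a block, or nothing. -/
def tterm {k : ℕ} (v : Blk) (o : Option (Fin k)) : Blk :=
  match o with
  | none => bot
  | some d => T^[(d : ℕ)] v

lemma tterm_apply {k : ℕ} (v : Blk) (o : Option (Fin k)) (a : ℕ) :
    tterm v o a = (match o with
      | none => 0
      | some d => v a - (d : ℕ)) := by
  rcases o with _ | d
  · rfl
  · show T^[(d:ℕ)] v a = v a - (d:ℕ)
    exact Tpow_apply _ v a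

/-- combination of blocks with tetris exponents given by `p` (`none` = omitted). -/
def cmb {k : ℕ} : {t : ℕ} → (Fin t → Blk) → (Fin t → Option (Fin k)) → Blk
  | 0, _, _ => bot
  | (t+1), y, p =>
      cmb (Fin.init y) (fun i => p i.castSucc) * tterm (y (Fin.last t)) (p (Fin.last t))

/-- `p` includes some block with tetris exponent `0`. -/
def pZero {t k : ℕ} (p : Fin t → Option (Fin k)) : Prop :=
  ∃ i d, p i = some d ∧ (d : ℕ) = 0

lemma cmb_succ {t k : ℕ} (y : Fin (t+1) → Blk) (p : Fin (t+1) → Option (Fin k)) :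
    cmb y p = cmb (fun i : Fin t => y i.castSucc) (fun i => p i.castSucc) *
      tterm (y (Fin.last t)) (p (Fin.last t)) := rfl

lemma cmb_snoc {t k : ℕ} (y : Fin t → Blk) (z : Blk) (p' : Fin (t+1) → Option (Fin k)) :
    cmb (Fin.snoc y z) p' =
      cmb y (fun i => p' i.castSucc) * tterm z (p' (Fin.last t)) := by
  rw [cmb_succ]
  have h1 : (fun i : Fin t => (Fin.snoc y z : Fin (t+1) → Blk) i.castSucc) = y :=
    funext fun i => by simp
  have h2 : (Fin.snoc y z : Fin (t+1) → Blk) (Fin.last t) = z := by simp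
  rw [h1, h2]

lemma le_cmb {t k : ℕ} (y : Fin t → Blk) (p : Fin t → Option (Fin k)) (i : Fin t) (a : ℕ) :
    tterm (y i) (p i) a ≤ cmb y p a := by
  induction t with
  | zero => exact i.elim0
  | succ t ih =>
    show _ ≤ (cmb (Fin.init y) (fun i => p i.castSucc) *
      tterm (y (Fin.last t)) (p (Fin.last t))) a
    rw [mul_apply]
    refine Fin.lastCases ?_ ?_ i
    · exact le_max_of_le_right le_rfl
    · intro j
      apply le_max_of_le_left
      have h := ih (Fin.init y) (fun i => p i.castSucc) j
      rwa [show Fin.init y j = y j.castSucc from rfl] at h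

lemma cmb_le {t k : ℕ} (y : Fin t → Blk) (p : Fin t → Option (Fin k)) (a : ℕ) (c : ℕ)
    (h : ∀ i, tterm (y i) (p i) a ≤ c) : cmb y p a ≤ c := by
  induction t with
  | zero => exact Nat.zero_le c
  | succ t ih =>
    show (cmb (Fin.init y) (fun i => p i.castSucc) *
      tterm (y (Fin.last t)) (p (Fin.last t))) a ≤ c
    rw [mul_apply]
    apply max_le
    · exact ih (Fin.init y) _ (fun j => h j.castSucc)
    · exact h (Fin.last t)

lemma cmb_apply_eq {t k : ℕ} (y : Fin t → Blk) (p : Fin t → Option (Fin k)) (a : ℕ)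
    (i0 : Fin t) (h0 : ∀ i, i ≠ i0 → y i a = 0) :
    cmb y p a = tterm (y i0) (p i0) a := by
  apply le_antisymm
  · apply cmb_le
    intro i
    by_cases hi : i = i0
    · subst hi; exact le_rfl
    · rw [tterm_apply]
      have := h0 i hi
      rcases p i with _ | d
      · exact Nat.zero_le _
      · simp only []
        omega
  · exact le_cmb y p i0 a

lemma cmb_apply_zero {t k : ℕ} (y : Fin t → Blk) (p : Fin t → Option (Fin k)) (a : ℕ)
    (h0 : ∀ i, y i a = 0) : cmb y p a = 0 := by
  apply Nat.le_zero.mp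
  apply cmb_le
  intro i
  rw [tterm_apply]
  have := h0 i
  rcases p i with _ | d
  · exact le_rfl
  · simp only []
    omega

section GG

variable {k : ℕ} {e : ℕ → Ultrafilter Blk}

lemma cohesive_map_Tpow (he : Cohesive k e) :
    ∀ d, d ≤ k → (e k).map (T^[d]) = e (k - d) := by
  intro d
  induction d with
  | zero =>
    intro _
    rw [Function.iterate_zero, Ultrafilter.map_id, Nat.sub_zero]
  | succ d ih =>
    intro hd
    rw [Function.iterate_succ']
    have h1 : (e k).map (T ∘ T^[d]) = ((e k).map (T^[d])).map T :=
      (Ultrafilter.map_map (e k) (T^[d]) T).symm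
    rw [h1, ih (by omega)]
    have h2 := he.2.1 (k - (d+1)) (by omega)
    rwa [show k - (d+1) + 1 = k - d by omega] at h2

lemma cohesive_mul_eq_max (he : Cohesive k e) {a b : ℕ} (ha : a ≤ k) (hb : b ≤ k) :
    e a * e b = e (max a b) := by
  rcases le_total a b with h | h
  · rw [max_eq_right h]
    exact (he.2.2 a b h hb).1
  · rw [max_eq_left h]
    exact (he.2.2 b a h ha).2

/-- Galvin–Glazer construction: a block sequence with all allowed combinations in `A`. -/
theorem gowers_combinatorial (hk : 1 ≤ k) (he : Cohesive k e) (A : Set Blk) (hA : A ∈ e k)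
    (m : ℕ) :
    ∃ y : Fin m → Blk, (∀ i, y i ∈ Fine k) ∧
      (∀ i i' : Fin m, i < i' → ∀ a ∈ supp (y i), ∀ b ∈ supp (y i'), a < b) ∧
      (∀ p : Fin m → Option (Fin k), pZero p → cmb y p ∈ A) := by
  suffices H : ∀ t : ℕ, ∃ y : Fin t → Blk, (∀ i, y i ∈ Fine k) ∧
      (∀ i i' : Fin t, i < i' → ∀ a ∈ supp (y i), ∀ b ∈ supp (y i'), a < b) ∧
      (∀ (p : Fin t → Option (Fin k)) (l : ℕ), 1 ≤ l → l ≤ k → (l = k ∨ pZero p) →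
        {w : Blk | cmb y p * w ∈ A} ∈ e l) ∧
      (∀ p : Fin t → Option (Fin k), pZero p → cmb y p ∈ A) by
    obtain ⟨y, h1, h2, _, h4⟩ := H m
    exact ⟨y, h1, h2, h4⟩
  intro t
  induction t with
  | zero =>
    refine ⟨fun i => i.elim0, fun i => i.elim0, fun i => i.elim0, ?_, ?_⟩
    · intro p l hl1 hl2 hcond
      have hc : cmb (fun i : Fin 0 => i.elim0) p = bot := rfl
      rw [hc]
      have hbot : {w : Blk | bot * w ∈ A} = A := by
        ext w; rw [Set.mem_setOf_eq, bot_mul]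
      rw [hbot]
      rcases hcond with h | ⟨i, _, _, _⟩
      · rwa [h]
      · exact i.elim0
    · rintro p ⟨i, _, _, _⟩
      exact i.elim0
  | succ t ih =>
    obtain ⟨y, hfine, hord, hInv, hMem⟩ := ih
    have hfin : (⋃ i, supp (y i)).Finite := Set.finite_iUnion (fun i => (hfine i).1)
    obtain ⟨N, hN⟩ := hfin.bddAbove
    have hNmem : ∀ (i : Fin t) (a : ℕ), a ∈ supp (y i) → a ≤ N := by
      intro i a ha
      exact hN (Set.mem_iUnion.mpr ⟨i, ha⟩)
    -- the ultrafilter-large set of candidate next blocks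
    have hmain : {z : Blk | z ∈ Fine k ∧ z ∈ Bd N ∧
        ∀ (p : Fin t → Option (Fin k)) (d : Fin k),
          (((d : ℕ) = 0 ∨ pZero p) → cmb y p * T^[(d:ℕ)] z ∈ A) ∧
          (∀ l : Fin (k+1), 1 ≤ (l : ℕ) → ((l : ℕ) = k ∨ (d : ℕ) = 0 ∨ pZero p) →
            {w : Blk | (cmb y p * T^[(d:ℕ)] z) * w ∈ A} ∈ e (l : ℕ))} ∈ e k := by
      have heq : {z : Blk | z ∈ Fine k ∧ z ∈ Bd N ∧
          ∀ (p : Fin t → Option (Fin k)) (d : Fin k),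
          (((d : ℕ) = 0 ∨ pZero p) → cmb y p * T^[(d:ℕ)] z ∈ A) ∧
          (∀ l : Fin (k+1), 1 ≤ (l : ℕ) → ((l : ℕ) = k ∨ (d : ℕ) = 0 ∨ pZero p) →
            {w : Blk | (cmb y p * T^[(d:ℕ)] z) * w ∈ A} ∈ e (l : ℕ))} =
          (Fine k) ∩ ((Bd N) ∩
          (⋂ (p : Fin t → Option (Fin k)), ⋂ (d : Fin k),
            ({z : Blk | ((d : ℕ) = 0 ∨ pZero p) → cmb y p * T^[(d:ℕ)] z ∈ A} ∩
             ⋂ (l : Fin (k+1)), {z : Blk | 1 ≤ (l : ℕ) →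
                ((l : ℕ) = k ∨ (d : ℕ) = 0 ∨ pZero p) →
                {w : Blk | (cmb y p * T^[(d:ℕ)] z) * w ∈ A} ∈ e (l : ℕ)}))) := by
        ext z
        simp only [Set.mem_setOf_eq, Set.mem_inter_iff, Set.mem_iInter]
        try tauto
      rw [heq]
      refine Filter.inter_mem (he.1 k le_rfl).1 (Filter.inter_mem ((he.1 k le_rfl).2.1 N) ?_)
      rw [Filter.iInter_mem]
      intro p
      rw [Filter.iInter_mem]
      intro d
      have hdk : (d : ℕ) < k := d.isLt
      refine Filter.inter_mem ?_ ?_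
      · -- R1
        by_cases hc : ((d : ℕ) = 0 ∨ pZero p)
        · have hJ : {w : Blk | cmb y p * w ∈ A} ∈ e (k - (d : ℕ)) := by
            apply hInv p (k - (d : ℕ)) (by omega) (by omega)
            rcases hc with h0 | hpz
            · left; omega
            · right; exact hpz
          rw [← cohesive_map_Tpow he (d : ℕ) (by omega)] at hJ
          have hpre := Ultrafilter.mem_map.mp hJ
          apply Filter.mem_of_superset hpre
          intro z hz _
          exact hz
        · apply Filter.univ_mem'
          intro z h
          exact absurd h hc
      · -- R2
        rw [Filter.iInter_mem]
        intro l
        by_cases hc : (1 ≤ (l : ℕ) ∧ ((l : ℕ) = k ∨ (d : ℕ) = 0 ∨ pZero p))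
        · obtain ⟨hl1, hcond⟩ := hc
          have hlk : (l : ℕ) ≤ k := by have := l.isLt; omega
          set L := max (k - (d : ℕ)) (l : ℕ) with hL
          have hJL : {v : Blk | cmb y p * v ∈ A} ∈ e L := by
            apply hInv p L (by omega) (by omega)
            rcases hcond with h1 | h2 | h3
            · left; omega
            · left; omega
            · right; exact h3
          have hprod : e L = e (k - (d : ℕ)) * e (l : ℕ) :=
            (cohesive_mul_eq_max he (by omega) hlk).symm
          rw [hprod, mem_mul] at hJL
          have hsets : {u : Blk | {m' : Blk | u * m' ∈ {v : Blk | cmb y p * v ∈ A}} ∈ e (l : ℕ)} =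
              {u : Blk | {w : Blk | (cmb y p * u) * w ∈ A} ∈ e (l : ℕ)} := by
            ext u
            have : {m' : Blk | u * m' ∈ {v : Blk | cmb y p * v ∈ A}} =
                {w : Blk | (cmb y p * u) * w ∈ A} := by
              ext w
              simp only [Set.mem_setOf_eq]
              rw [mul_assoc]
            rw [Set.mem_setOf_eq, Set.mem_setOf_eq, this]
          rw [hsets] at hJL
          rw [← cohesive_map_Tpow he (d : ℕ) (by omega)] at hJL
          have hpre := Ultrafilter.mem_map.mp hJL
          apply Filter.mem_of_superset hpre
          intro z hz _ _
          exact hz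
        · apply Filter.univ_mem'
          intro z h1 h2
          exact absurd ⟨h1, h2⟩ hc
    obtain ⟨z, hzF, hzB, hzR⟩ := Ultrafilter.nonempty_of_mem hmain
    refine ⟨Fin.snoc y z, ?_, ?_, ?_, ?_⟩
    · intro i
      refine Fin.lastCases ?_ ?_ i
      · rw [Fin.snoc_last]; exact hzF
      · intro j; rw [Fin.snoc_castSucc]; exact hfine j
    · intro i i' hii' a ha b hb
      rcases Fin.eq_castSucc_or_eq_last i' with ⟨j', rfl⟩ | rfl
      · obtain ⟨j, rfl⟩ : ∃ j : Fin t, i = Fin.castSucc j := by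
          rcases Fin.eq_castSucc_or_eq_last i with ⟨j, hj⟩ | hj
          · exact ⟨j, hj⟩
          · rw [hj] at hii'
            exact absurd (lt_trans hii' (Fin.castSucc_lt_last j')) (lt_irrefl _)
        rw [Fin.snoc_castSucc] at ha hb
        exact hord j j' (by rwa [Fin.castSucc_lt_castSucc_iff] at hii') a ha b hb
      · obtain ⟨j, rfl⟩ : ∃ j : Fin t, i = Fin.castSucc j := by
          rcases Fin.eq_castSucc_or_eq_last i with ⟨j, hj⟩ | hj
          · exact ⟨j, hj⟩
          · rw [hj] at hii'
            exact absurd hii' (lt_irrefl _)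
        rw [Fin.snoc_castSucc] at ha
        rw [Fin.snoc_last] at hb
        have hbN : ¬ b ≤ N := fun hbN => hb (hzB b hbN)
        have haN : a ≤ N := hNmem j a ha
        omega
    · -- invariant
      intro p' l hl1 hl2 hcond
      rw [cmb_snoc]
      rcases hpl : p' (Fin.last t) with _ | d
      · rw [show tterm z (none : Option (Fin k)) = bot from rfl, mul_bot]
        apply hInv (fun i => p' i.castSucc) l hl1 hl2
        rcases hcond with h | ⟨i, d0, hi, hd0⟩
        · left; exact h
        · right
          refine Fin.lastCases ?_ ?_ i hi
          · intro hi'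
            rw [hpl] at hi'
            exact absurd hi' (by simp)
          · intro j hj
            exact ⟨j, d0, hj, hd0⟩
      · rw [show tterm z (some d) = T^[(d:ℕ)] z from rfl]
        have := (hzR (fun i => p' i.castSucc) d).2 ⟨l, by omega⟩ (by simpa using hl1) ?_
        · simpa using this
        · show (l = k ∨ (d : ℕ) = 0 ∨ pZero (fun i => p' i.castSucc))
          rcases hcond with h | ⟨i, d0, hi, hd0⟩
          · left; exact h
          · refine Fin.lastCases ?_ ?_ i hi
            · intro hi'
              rw [hpl] at hi'
              right; left
              have : d = d0 := by injection hi'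
              rw [this, hd0]
            · intro j hj
              right; right
              exact ⟨j, d0, hj, hd0⟩
    · -- membership
      intro p' hpz
      rw [cmb_snoc]
      rcases hpl : p' (Fin.last t) with _ | d
      · rw [show tterm z (none : Option (Fin k)) = bot from rfl, mul_bot]
        apply hMem (fun i => p' i.castSucc)
        obtain ⟨i, d0, hi, hd0⟩ := hpz
        refine Fin.lastCases ?_ ?_ i hi
        · intro hi'
          rw [hpl] at hi'
          exact absurd hi' (by simp)
        · intro j hj
          exact ⟨j, d0, hj, hd0⟩
      · rw [show tterm z (some d) = T^[(d:ℕ)] z from rfl]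
        apply (hzR (fun i => p' i.castSucc) d).1
        obtain ⟨i, d0, hi, hd0⟩ := hpz
        refine Fin.lastCases ?_ ?_ i hi
        · intro hi'
          rw [hpl] at hi'
          left
          have : d = d0 := by injection hi'
          rw [this, hd0]
        · intro j hj
          right
          exact ⟨j, d0, hj, hd0⟩

end GG

end Blk

open Blk in
/-- exponential-net realization of a pattern as a vector in `ℝⁿ` -/
def theta (n k : ℕ) (Λ : ℝ) (q : Blk) : Fin n → ℝ :=
  fun a => if q a.1 = 0 then 0 else Λ ^ (k - q a.1)

lemma theta_apply {n k : ℕ} {Λ : ℝ} (q : Blk) (a : Fin n) :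
    theta n k Λ q a = if q a.1 = 0 then 0 else Λ ^ (k - q a.1) := rfl

lemma ultra_pigeonhole {α : Type} (U : Ultrafilter α) (S : Finset ℤ) (g : α → ℤ)
    (B : Set α) (hB : B ∈ U) (hg : ∀ x ∈ B, g x ∈ S) :
    ∃ v ∈ S, {x | x ∈ B ∧ g x = v} ∈ U := by
  classical
  induction S using Finset.induction generalizing B with
  | empty =>
    obtain ⟨x, hx⟩ := Ultrafilter.nonempty_of_mem hB
    exact absurd (hg x hx) (by simp)
  | @insert a S ha ih =>
    have hsplit : B ⊆ {x | x ∈ B ∧ g x = a} ∪ {x | x ∈ B ∧ g x ≠ a} := by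
      intro x hx
      by_cases h : g x = a
      · exact Or.inl ⟨hx, h⟩
      · exact Or.inr ⟨hx, h⟩
    have hun := Filter.mem_of_superset hB hsplit
    rcases Ultrafilter.union_mem_iff.mp hun with h | h
    · exact ⟨a, Finset.mem_insert_self a S, h⟩
    · obtain ⟨v, hvS, hv⟩ := ih {x | x ∈ B ∧ g x ≠ a} h
        (fun x hx => Finset.mem_of_mem_insert_of_ne (hg x hx.1) hx.2)
      refine ⟨v, Finset.mem_insert_of_mem hvS, Filter.mem_of_superset hv ?_⟩
      rintro x ⟨⟨h1, _⟩, h2⟩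
      exact ⟨h1, h2⟩

lemma norm_eq_one_of {n : ℕ} (v : Fin n → ℝ) (h1 : ∀ a, |v a| ≤ 1) (h2 : ∃ a, v a = 1) :
    ‖v‖ = 1 := by
  apply le_antisymm
  · exact (pi_norm_le_iff_of_nonneg zero_le_one).mpr (fun a => by
      rw [Real.norm_eq_abs]; exact h1 a)
  · obtain ⟨a, ha⟩ := h2
    calc (1:ℝ) = ‖v a‖ := by rw [Real.norm_eq_abs, ha, abs_one]
    _ ≤ ‖v‖ := norm_le_pi_norm v a

lemma exists_abs_eq_norm {n : ℕ} (v : Fin n → ℝ) (hv : ‖v‖ ≠ 0) : ∃ a, |v a| = ‖v‖ := by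
  rcases Nat.eq_zero_or_pos n with h0 | hpos
  · exfalso
    apply hv
    subst h0
    rw [Pi.norm_def]
    simp
  · have hne : (Finset.univ : Finset (Fin n)).Nonempty := ⟨⟨0, hpos⟩, Finset.mem_univ _⟩
    obtain ⟨a, _, ha⟩ := Finset.exists_mem_eq_sup (Finset.univ : Finset (Fin n)) hne
      (fun b => ‖v b‖₊)
    refine ⟨a, ?_⟩
    rw [Pi.norm_def, ha]
    rw [coe_nnnorm, Real.norm_eq_abs]




/-- The positive unit sphere of `ℓ_∞^n`: positive vectors of sup-norm one. -/
def PosSphere (n : ℕ) : Set (Fin n → ℝ) :=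
  {x | (∀ i, 0 ≤ x i) ∧ ‖x‖ = 1}

/-- `(y i)_{i<m}` is a normalized positive block sequence in `ℓ_∞^n`. -/
def IsPosBlockSeq {n : ℕ} (m : ℕ) (y : Fin m → (Fin n → ℝ)) : Prop :=
  (∀ i, ∀ a, 0 ≤ y i a) ∧ (∀ i, ‖y i‖ = 1) ∧
  ∀ i j : Fin m, i < j → ∀ a : Fin n, y i a ≠ 0 → ∀ b : Fin n, y j b ≠ 0 → a < b

/-- The positive unit sphere of the span of a finite sequence of vectors. -/
def PosSphereSpan {n m : ℕ} (y : Fin m → (Fin n → ℝ)) : Set (Fin n → ℝ) :=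
  {v | v ∈ Submodule.span ℝ (Set.range y) ∧ (∀ i, 0 ≤ v i) ∧ ‖v‖ = 1}

set_option maxHeartbeats 1600000 in
/-- **Finite stabilization on the positive sphere of `ℓ_∞^n`.** For all `C, ε > 0` and `m ≥ 1`
there is `n` such that every `C`-Lipschitz `f : PS_{ℓ_∞^n} → ℝ` admits a normalized positive
block sequence `(y_i)_{i<m}` with `osc(f ↾ PS_{[y_i]_{i<m}}) < ε`. -/
theorem finite_stabilization_pos (C ε : ℝ) (hC : 0 < C) (hε : 0 < ε) (m : ℕ) (hm : 1 ≤ m) :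
    ∃ n : ℕ, ∀ f : (Fin n → ℝ) → ℝ,
      (∀ x ∈ PosSphere n, ∀ y ∈ PosSphere n, |f x - f y| ≤ C * ‖x - y‖) →
      ∃ y : Fin m → (Fin n → ℝ), IsPosBlockSeq m y ∧
        ∀ u ∈ PosSphereSpan y, ∀ w ∈ PosSphereSpan y, |f u - f w| < ε := by
  classical
  by_contra hcon
  push_neg at hcon
  choose F hLip hbad using hcon
  -- parameters
  set δ : ℝ := min (1/2) (ε/(8*C)) with hδdef
  have hδpos : 0 < δ := lt_min (by norm_num) (by positivity)
  have hδhalf : δ ≤ 1/2 := min_le_left _ _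
  have hδε : δ ≤ ε/(8*C) := min_le_right _ _
  set Λ : ℝ := 1 - δ with hΛdef
  have hΛpos : 0 < Λ := by simp only [hΛdef]; linarith
  have hΛlt1 : Λ < 1 := by simp only [hΛdef]; linarith
  have hΛle1 : Λ ≤ 1 := le_of_lt hΛlt1
  have hΛ0 : (0:ℝ) ≤ Λ := le_of_lt hΛpos
  obtain ⟨k, hkpow⟩ := exists_pow_lt_of_lt_one hδpos hΛlt1
  have hk1 : 1 ≤ k := by
    rcases Nat.eq_zero_or_pos k with h | h
    · exfalso
      rw [h, pow_zero] at hkpow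
      linarith
    · exact h
  set δ0 : ℝ := ε/4 with hδ0def
  have hδ0pos : 0 < δ0 := by positivity
  -- the coloring machinery
  set W := Filter.hyperfilter ℕ with hWdef
  set colorFn : ℕ → Blk → ℤ :=
    fun n q => ⌊(F n (theta n k Λ q) - F n (fun _ => 1)) / δ0⌋ with hcolorFn
  set S : Finset ℤ := Finset.Icc ⌊(-C)/δ0⌋ ⌊C/δ0⌋ with hSdef
  -- basic facts about the positive sphere
  have hPScoord : ∀ (n : ℕ) (x : Fin n → ℝ), x ∈ PosSphere n → ∀ a, 0 ≤ x a ∧ x a ≤ 1 := by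
    intro n x hx a
    refine ⟨hx.1 a, ?_⟩
    have h1 : ‖x a‖ ≤ ‖x‖ := norm_le_pi_norm x a
    rw [hx.2, Real.norm_eq_abs] at h1
    exact le_trans (le_abs_self _) h1
  have hPSdist : ∀ (n : ℕ) (x z : Fin n → ℝ), x ∈ PosSphere n → z ∈ PosSphere n →
      ‖x - z‖ ≤ 1 := by
    intro n x z hx hz
    apply (pi_norm_le_iff_of_nonneg zero_le_one).mpr
    intro a
    have h1 := hPScoord n x hx a
    have h2 := hPScoord n z hz a
    rw [Pi.sub_apply, Real.norm_eq_abs, abs_le]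
    constructor <;> linarith [h1.1, h1.2, h2.1, h2.2]
  have hones : ∀ n : ℕ, 1 ≤ n → (fun _ => (1:ℝ)) ∈ PosSphere n := by
    intro n hn
    refine ⟨fun a => zero_le_one, norm_eq_one_of _ (fun a => by norm_num) ⟨⟨0, hn⟩, rfl⟩⟩
  have hθPS : ∀ (n : ℕ) (q : Blk), q ∈ Blk.Fine k → (∀ a : ℕ, q a ≠ 0 → a < n) →
      theta n k Λ q ∈ PosSphere n := by
    intro n q hq hbnd
    obtain ⟨hfin, hle, i0, hi0⟩ := hq
    constructor
    · intro a
      rw [theta_apply]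
      split
      · exact le_refl 0
      · positivity
    · apply norm_eq_one_of
      · intro a
        rw [theta_apply]
        split
        · norm_num
        · rw [abs_of_nonneg (by positivity)]
          exact pow_le_one₀ hΛ0 hΛle1
      · have hi0n : i0 < n := hbnd i0 (by omega)
        refine ⟨⟨i0, hi0n⟩, ?_⟩
        rw [theta_apply]
        have : q (⟨i0, hi0n⟩ : Fin n).1 = k := hi0
        rw [this]
        rw [if_neg (by omega)]
        simp
  -- colors of relevant patterns are in S
  have hbound : ∀ q ∈ Blk.Fine k, ∀ n : ℕ, (∀ a : ℕ, q a ≠ 0 → a < n) → 1 ≤ n →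
      colorFn n q ∈ S := by
    intro q hq n hbnd hn1
    have hθ := hθPS n q hq hbnd
    have h1 := hones n hn1
    have hd := hPSdist n (theta n k Λ q) (fun _ => 1) hθ h1
    have hL := hLip n (theta n k Λ q) hθ (fun _ => 1) h1
    have habs : |F n (theta n k Λ q) - F n (fun _ => 1)| ≤ C := by
      calc |F n (theta n k Λ q) - F n (fun _ => 1)| ≤ C * ‖theta n k Λ q - (fun _ => 1)‖ := hL
      _ ≤ C * 1 := mul_le_mul_of_nonneg_left hd (le_of_lt hC)
      _ = C := mul_one C
    rw [hSdef, Finset.mem_Icc]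
    constructor
    · apply Int.floor_le_floor
      rw [div_le_div_iff_of_pos_right hδ0pos]
      rw [abs_le] at habs
      linarith [habs.1]
    · apply Int.floor_le_floor
      rw [div_le_div_iff_of_pos_right hδ0pos]
      rw [abs_le] at habs
      linarith [habs.2]
  -- ultralimit color
  have hcolor : ∀ q ∈ Blk.Fine k, ∃ v ∈ S, {n : ℕ | colorFn n q = v} ∈ W := by
    intro q hq
    obtain ⟨Nq, hNq⟩ := hq.1.bddAbove
    have hB : {n : ℕ | Nq + 1 ≤ n} ∈ W := by
      apply Filter.mem_hyperfilter_of_finite_compl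
      have : {n : ℕ | Nq + 1 ≤ n}ᶜ ⊆ {n : ℕ | n < Nq + 1} := by
        intro x hx
        simp only [Set.mem_compl_iff, Set.mem_setOf_eq, not_le] at hx ⊢
        exact hx
      exact Set.Finite.subset (Set.finite_lt_nat _) this
    have hg : ∀ x ∈ {n : ℕ | Nq + 1 ≤ n}, colorFn x q ∈ S := by
      intro x hx
      simp only [Set.mem_setOf_eq] at hx
      apply hbound q hq x ?_ (by omega)
      intro a ha
      have : a ≤ Nq := hNq ha
      omega
    obtain ⟨v, hvS, hv⟩ := ultra_pigeonhole W S (fun n => colorFn n q) _ hB hg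
    exact ⟨v, hvS, Filter.mem_of_superset hv (fun x hx => hx.2)⟩
  set color : Blk → ℤ := fun q =>
    if h : ∃ v ∈ S, {n : ℕ | colorFn n q = v} ∈ W then h.choose else 0 with hcolordef
  have hcolorS : ∀ q ∈ Blk.Fine k, color q ∈ S ∧ {n : ℕ | colorFn n q = color q} ∈ W := by
    intro q hq
    have hex := hcolor q hq
    simp only [hcolordef, dif_pos hex]
    exact ⟨hex.choose_spec.1, hex.choose_spec.2⟩
  -- pigeonhole over the cohesive ultrafilter and the combinatorial theorem
  obtain ⟨e, he⟩ := Blk.exists_cohesive k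
  obtain ⟨v0, hv0S, hv0⟩ := ultra_pigeonhole (e k) S color (Blk.Fine k)
    (he.1 k le_rfl).1 (fun q hq => (hcolorS q hq).1)
  obtain ⟨qs, hqsF, hqsOrd, hqsCmb⟩ := Blk.gowers_combinatorial hk1 he _ hv0 m
  -- support bound for the blocks
  have hfinsupp : (⋃ i, Blk.supp (qs i)).Finite := Set.finite_iUnion (fun i => (hqsF i).1)
  obtain ⟨Nmax, hNmax⟩ := hfinsupp.bddAbove
  have hsupp : ∀ (i : Fin m) (a : ℕ), qs i a ≠ 0 → a ≤ Nmax := by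
    intro i a ha
    exact hNmax (Set.mem_iUnion.mpr ⟨i, ha⟩)
  -- choose a good dimension n
  have hnset : {n : ℕ | Nmax + 1 ≤ n ∧ ∀ p : Fin m → Option (Fin k), Blk.pZero p →
      colorFn n (Blk.cmb qs p) = v0} ∈ W := by
    have h1 : {n : ℕ | Nmax + 1 ≤ n} ∈ W := by
      apply Filter.mem_hyperfilter_of_finite_compl
      have hsub : {n : ℕ | Nmax + 1 ≤ n}ᶜ ⊆ {n : ℕ | n < Nmax + 1} := by
        intro x hx
        simp only [Set.mem_compl_iff, Set.mem_setOf_eq, not_le] at hx ⊢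
        exact hx
      exact Set.Finite.subset (Set.finite_lt_nat _) hsub
    have h2 : (⋂ p : {p : Fin m → Option (Fin k) // Blk.pZero p},
        {n : ℕ | colorFn n (Blk.cmb qs p.1) = v0}) ∈ W := by
      rw [← Ultrafilter.mem_coe, Filter.iInter_mem]
      intro p
      rw [Ultrafilter.mem_coe]
      have hcl := (hcolorS _ (hqsCmb p.1 p.2).1).2
      rwa [(hqsCmb p.1 p.2).2] at hcl
    have hint := Filter.inter_mem h1 h2
    apply Filter.mem_of_superset hint
    rintro x ⟨hx1, hx2⟩
    exact ⟨hx1, fun p hp => Set.mem_iInter.mp hx2 ⟨p, hp⟩⟩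
  obtain ⟨n, hnN, hnp⟩ := Ultrafilter.nonempty_of_mem hnset
  set f := F n with hfdef
  set y : Fin m → (Fin n → ℝ) := fun i => theta n k Λ (qs i) with hydef
  -- attainment coordinates
  have hatt : ∀ i : Fin m, ∃ a : Fin n, qs i a.1 = k := by
    intro i
    obtain ⟨_, hle, a0, ha0⟩ := hqsF i
    have ha0N : a0 ≤ Nmax := hsupp i a0 (by omega)
    exact ⟨⟨a0, by omega⟩, ha0⟩
  have hyif : ∀ (i : Fin m) (a : Fin n), y i a = if qs i a.1 = 0 then 0 else Λ ^ (k - qs i a.1) :=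
    fun i a => rfl
  have hblk : IsPosBlockSeq m y := by
    refine ⟨?_, ?_, ?_⟩
    · intro i a
      rw [hyif]
      split
      · exact le_refl 0
      · exact pow_nonneg hΛ0 _
    · intro i
      apply norm_eq_one_of
      · intro a
        rw [hyif]
        split
        · norm_num
        · rw [abs_of_nonneg (pow_nonneg hΛ0 _)]
          exact pow_le_one₀ hΛ0 hΛle1
      · obtain ⟨a, ha⟩ := hatt i
        refine ⟨a, ?_⟩
        rw [hyif, ha, if_neg (by omega), Nat.sub_self, pow_zero]
    · intro i j hij a ha b hb
      have ha' : qs i a.1 ≠ 0 := by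
        intro h0
        apply ha
        rw [hyif, if_pos h0]
      have hb' : qs j b.1 ≠ 0 := by
        intro h0
        apply hb
        rw [hyif, if_pos h0]
      exact Fin.lt_def.mpr (hqsOrd i j hij a.1 ha' b.1 hb')
  obtain ⟨u, hu, w, hw, hεle⟩ := hbad n y hblk
  -- disjointness of supports
  have hdisj : ∀ (i i' : Fin m), i ≠ i' → ∀ a : ℕ, qs i a ≠ 0 → qs i' a = 0 := by
    intro i i' hne a hi
    by_contra hi'
    rcases lt_or_gt_of_ne hne with h | h
    · exact absurd (hqsOrd i i' h a hi a hi') (lt_irrefl a)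
    · exact absurd (hqsOrd i' i h a hi' a hi) (lt_irrefl a)
  have hΛk1 : Λ ^ k < 1 := by linarith
  -- the key approximation
  have key : ∀ v : Fin n → ℝ, v ∈ PosSphereSpan y →
      ∃ p : Fin m → Option (Fin k), Blk.pZero p ∧ ‖v - theta n k Λ (Blk.cmb qs p)‖ ≤ δ := by
    intro v hv
    obtain ⟨hvspan, hvpos, hvnorm⟩ := hv
    obtain ⟨c, hc⟩ := (Submodule.mem_span_range_iff_exists_fun ℝ).mp hvspan
    have hva : ∀ a : Fin n, v a = ∑ i : Fin m, c i * y i a := by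
      intro a
      rw [← hc, Finset.sum_apply]
      apply Finset.sum_congr rfl
      intro i _
      rw [Pi.smul_apply, smul_eq_mul]
    have hva1 : ∀ (a : Fin n) (i : Fin m), qs i a.1 ≠ 0 → v a = c i * y i a := by
      intro a i hi
      rw [hva]
      apply Finset.sum_eq_single i
      · intro j _ hj
        have h0 : qs j a.1 = 0 := hdisj i j (Ne.symm hj) a.1 hi
        rw [hyif, if_pos h0, mul_zero]
      · intro h
        exact absurd (Finset.mem_univ i) h
    have hva0 : ∀ a : Fin n, (∀ i : Fin m, qs i a.1 = 0) → v a = 0 := by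
      intro a h
      rw [hva]
      apply Finset.sum_eq_zero
      intro i _
      rw [hyif, if_pos (h i), mul_zero]
    have hcval : ∀ i : Fin m, 0 ≤ c i ∧ c i ≤ 1 := by
      intro i
      obtain ⟨a, ha⟩ := hatt i
      have hz : qs i a.1 ≠ 0 := by omega
      have h1 : v a = c i * y i a := hva1 a i hz
      have h2 : y i a = 1 := by rw [hyif, ha, if_neg (by omega), Nat.sub_self, pow_zero]
      rw [h2, mul_one] at h1
      constructor
      · rw [← h1]; exact hvpos a
      · rw [← h1]
        have hle := norm_le_pi_norm v a
        rw [hvnorm, Real.norm_eq_abs] at hle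
        exact le_trans (le_abs_self _) hle
    have hmax : ∃ i0 : Fin m, c i0 = 1 := by
      have hvne : ‖v‖ ≠ 0 := by rw [hvnorm]; norm_num
      obtain ⟨a0, ha0⟩ := exists_abs_eq_norm v hvne
      rw [hvnorm] at ha0
      have hex : ∃ i : Fin m, qs i a0.1 ≠ 0 := by
        by_contra hno
        push_neg at hno
        rw [hva0 a0 hno] at ha0
        norm_num at ha0
      obtain ⟨i, hi⟩ := hex
      have h1 : v a0 = c i * y i a0 := hva1 a0 i hi
      have hy0 : y i a0 = Λ ^ (k - qs i a0.1) := by rw [hyif, if_neg hi]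
      have hy01 : 0 < y i a0 ∧ y i a0 ≤ 1 := by
        rw [hy0]
        exact ⟨pow_pos hΛpos _, pow_le_one₀ hΛ0 hΛle1⟩
      rw [abs_of_nonneg (hvpos a0)] at ha0
      have hci := hcval i
      refine ⟨i, ?_⟩
      nlinarith [hci.1, hci.2, hy01.1, hy01.2]
    -- define the pattern
    set p : Fin m → Option (Fin k) := fun i =>
      if c i ≤ Λ ^ k then none
      else some ⟨Nat.findGreatest (fun j => c i ≤ Λ ^ j) (k-1), by
        have hfg := Nat.findGreatest_le (P := fun j => c i ≤ Λ ^ j) (k-1)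
        omega⟩ with hpdef
    have hfgle : ∀ i : Fin m, Nat.findGreatest (fun j => c i ≤ Λ ^ j) (k-1) ≤ k - 1 :=
      fun i => Nat.findGreatest_le (k-1)
    have hpeq : ∀ i : Fin m, (c i ≤ Λ ^ k → p i = none) ∧
        (¬ (c i ≤ Λ ^ k) → p i = some ⟨Nat.findGreatest (fun j => c i ≤ Λ ^ j) (k-1),
          by have := hfgle i; omega⟩) := by
      intro i
      constructor
      · intro h
        simp only [hpdef]
        rw [if_pos h]
      · intro h
        simp only [hpdef]
        rw [if_neg h]
    have hpnone : ∀ i : Fin m, p i = none → c i ≤ Λ ^ k := by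
      intro i h
      by_cases hci : c i ≤ Λ ^ k
      · exact hci
      · rw [(hpeq i).2 hci] at h
        exact absurd h (by simp)
    have hpspec : ∀ (i : Fin m) (d : Fin k), p i = some d →
        (c i ≤ Λ ^ (d:ℕ) ∧ Λ ^ ((d:ℕ)+1) < c i) := by
      intro i d hd
      by_cases hci : c i ≤ Λ ^ k
      · rw [(hpeq i).1 hci] at hd
        exact absurd hd (by simp)
      · rw [(hpeq i).2 hci] at hd
        have hdval : (d : ℕ) = Nat.findGreatest (fun j => c i ≤ Λ ^ j) (k-1) := by
          injection hd with h'
          rw [← h']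
        constructor
        · rw [hdval]
          have h0 : (fun j => c i ≤ Λ ^ j) 0 := by
            show c i ≤ Λ ^ 0
            rw [pow_zero]
            exact (hcval i).2
          exact Nat.findGreatest_spec (P := fun j => c i ≤ Λ ^ j) (m := 0) (Nat.zero_le _) h0
        · by_cases hdk : (d:ℕ) + 1 ≤ k - 1
          · have hgr := Nat.findGreatest_is_greatest (P := fun j => c i ≤ Λ ^ j) (n := k-1)
              (by omega) hdk
            exact lt_of_not_ge hgr
          · have hle := hfgle i
            have hdk' : (d:ℕ) + 1 = k := by omega
            rw [hdk']
            exact lt_of_not_ge hci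
    have hpz : Blk.pZero p := by
      obtain ⟨i0, hi0⟩ := hmax
      rcases hp : p i0 with _ | d
      · have := hpnone i0 hp
        rw [hi0] at this
        linarith
      · have hspec := hpspec i0 d hp
        rw [hi0] at hspec
        have hd0 : (d:ℕ) = 0 := by
          by_contra hd0
          have := pow_lt_one₀ hΛ0 hΛlt1 hd0
          linarith [hspec.1]
        exact ⟨i0, d, hp, hd0⟩
    refine ⟨p, hpz, ?_⟩
    apply (pi_norm_le_iff_of_nonneg (le_of_lt hδpos)).mpr
    intro a
    rw [Pi.sub_apply, Real.norm_eq_abs]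
    by_cases hex : ∃ i : Fin m, qs i a.1 ≠ 0
    · obtain ⟨i, hi⟩ := hex
      have hvai : v a = c i * y i a := hva1 a i hi
      have hcmba : Blk.cmb qs p a.1 = Blk.tterm (qs i) (p i) a.1 :=
        Blk.cmb_apply_eq qs p a.1 i (fun j hj => hdisj i j (Ne.symm hj) a.1 hi)
      have ht1 : 1 ≤ qs i a.1 := by omega
      have htk : qs i a.1 ≤ k := (hqsF i).2.1 a.1
      have hyia : y i a = Λ ^ (k - qs i a.1) := by rw [hyif, if_neg hi]
      rw [hvai, hyia]
      rcases hp : p i with _ | d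
      · have hcle : c i ≤ Λ ^ k := hpnone i hp
        have h0 : Blk.cmb qs p a.1 = 0 := by
          rw [hcmba, hp]
          rfl
        rw [theta_apply, if_pos h0, sub_zero]
        rw [abs_of_nonneg (mul_nonneg (hcval i).1 (pow_nonneg hΛ0 _))]
        calc c i * Λ ^ (k - qs i a.1) ≤ Λ ^ k * 1 :=
              mul_le_mul hcle (pow_le_one₀ hΛ0 hΛle1) (pow_nonneg hΛ0 _)
                (pow_nonneg hΛ0 _)
        _ = Λ ^ k := mul_one _
        _ ≤ δ := le_of_lt hkpow
      · obtain ⟨hcd1, hcd2⟩ := hpspec i d hp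
        have hcmba' : Blk.cmb qs p a.1 = qs i a.1 - (d:ℕ) := by
          rw [hcmba, hp]
          exact Blk.Tpow_apply _ _ _
        by_cases htd : qs i a.1 ≤ (d:ℕ)
        · have h0 : Blk.cmb qs p a.1 = 0 := by rw [hcmba']; omega
          rw [theta_apply, if_pos h0, sub_zero]
          rw [abs_of_nonneg (mul_nonneg (hcval i).1 (pow_nonneg hΛ0 _))]
          calc c i * Λ ^ (k - qs i a.1) ≤ Λ ^ (d:ℕ) * Λ ^ (k - qs i a.1) :=
                mul_le_mul_of_nonneg_right hcd1 (pow_nonneg hΛ0 _)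
          _ = Λ ^ ((d:ℕ) + (k - qs i a.1)) := (pow_add Λ _ _).symm
          _ ≤ Λ ^ k := pow_le_pow_of_le_one hΛ0 hΛle1 (by omega)
          _ ≤ δ := le_of_lt hkpow
        · push_neg at htd
          have h0 : Blk.cmb qs p a.1 ≠ 0 := by rw [hcmba']; omega
          rw [theta_apply, if_neg h0]
          have hexp : k - Blk.cmb qs p a.1 = (k - qs i a.1) + (d:ℕ) := by
            rw [hcmba']; omega
          rw [hexp, pow_add]
          have hfac : c i * Λ ^ (k - qs i a.1) - Λ ^ (k - qs i a.1) * Λ ^ (d:ℕ) =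
              Λ ^ (k - qs i a.1) * (c i - Λ ^ (d:ℕ)) := by ring
          rw [hfac, abs_mul, abs_of_nonneg (pow_nonneg hΛ0 _)]
          have h1 : |c i - Λ ^ (d:ℕ)| ≤ Λ ^ (d:ℕ) - Λ ^ ((d:ℕ)+1) := by
            rw [abs_of_nonpos (by linarith)]
            linarith
          have h2 : Λ ^ (d:ℕ) - Λ ^ ((d:ℕ)+1) = Λ ^ (d:ℕ) * (1 - Λ) := by
            rw [pow_succ]; ring
          have h3 : Λ ^ (k - qs i a.1) ≤ 1 := pow_le_one₀ hΛ0 hΛle1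
          have h4 : Λ ^ (d:ℕ) ≤ 1 := pow_le_one₀ hΛ0 hΛle1
          have hδΛ : 1 - Λ = δ := by rw [hΛdef]; ring
          calc Λ ^ (k - qs i a.1) * |c i - Λ ^ (d:ℕ)| ≤
                1 * (Λ ^ (d:ℕ) - Λ ^ ((d:ℕ)+1)) :=
              mul_le_mul h3 h1 (abs_nonneg _) zero_le_one
          _ = Λ ^ (d:ℕ) * (1 - Λ) := by rw [one_mul, h2]
          _ ≤ 1 * (1 - Λ) := mul_le_mul_of_nonneg_right h4 (by linarith)
          _ = δ := by rw [one_mul, hδΛ]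
    · push_neg at hex
      have hv0' : v a = 0 := hva0 a hex
      have hcmb0 : Blk.cmb qs p a.1 = 0 := Blk.cmb_apply_zero qs p a.1 hex
      rw [hv0', theta_apply, if_pos hcmb0, sub_zero, abs_zero]
      exact le_of_lt hδpos
  -- both u and w approximate net points in the same color bucket
  have hfinal : ∀ v : Fin n → ℝ, v ∈ PosSphereSpan y →
      ∃ g : Fin n → ℝ, g ∈ PosSphere n ∧ ‖v - g‖ ≤ δ ∧
        ⌊(f g - f (fun _ => 1)) / δ0⌋ = v0 := by
    intro v hv
    obtain ⟨p, hpz, hnear⟩ := key v hv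
    have hcmbF : Blk.cmb qs p ∈ Blk.Fine k := (hqsCmb p hpz).1
    have hbnd : ∀ a : ℕ, Blk.cmb qs p a ≠ 0 → a < n := by
      intro a ha
      have hex : ¬ (∀ i : Fin m, qs i a = 0) := fun h => ha (Blk.cmb_apply_zero qs p a h)
      push_neg at hex
      obtain ⟨i, hi⟩ := hex
      have := hsupp i a hi
      omega
    refine ⟨theta n k Λ (Blk.cmb qs p), hθPS n _ hcmbF hbnd, hnear, ?_⟩
    exact hnp p hpz
  obtain ⟨gu, hguPS, hgu, hguc⟩ := hfinal u hu
  obtain ⟨gw, hgwPS, hgw, hgwc⟩ := hfinal w hw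
  have huPS : u ∈ PosSphere n := ⟨hu.2.1, hu.2.2⟩
  have hwPS : w ∈ PosSphere n := ⟨hw.2.1, hw.2.2⟩
  have h1 : |f u - f gu| ≤ C * δ := by
    calc |f u - f gu| ≤ C * ‖u - gu‖ := hLip n u huPS gu hguPS
    _ ≤ C * δ := mul_le_mul_of_nonneg_left hgu (le_of_lt hC)
  have h2 : |f w - f gw| ≤ C * δ := by
    calc |f w - f gw| ≤ C * ‖w - gw‖ := hLip n w hwPS gw hgwPS
    _ ≤ C * δ := mul_le_mul_of_nonneg_left hgw (le_of_lt hC)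
  have h3 : |f gu - f gw| < δ0 := by
    have l1 : (v0:ℝ) ≤ (f gu - f (fun _ => 1))/δ0 := by
      rw [← hguc]; exact Int.floor_le _
    have l2 : (f gu - f (fun _ => 1))/δ0 < v0 + 1 := by
      rw [← hguc]; exact Int.lt_floor_add_one _
    have l3 : (v0:ℝ) ≤ (f gw - f (fun _ => 1))/δ0 := by
      rw [← hgwc]; exact Int.floor_le _
    have l4 : (f gw - f (fun _ => 1))/δ0 < v0 + 1 := by
      rw [← hgwc]; exact Int.lt_floor_add_one _
    have hlt : |(f gu - f (fun _ => 1))/δ0 - (f gw - f (fun _ => 1))/δ0| < 1 := by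
      rw [abs_lt]
      constructor <;> linarith
    rw [div_sub_div_same, abs_div, abs_of_pos hδ0pos, div_lt_one hδ0pos] at hlt
    have heq : f gu - f (fun _ => 1) - (f gw - f (fun _ => 1)) = f gu - f gw := by ring
    rwa [heq] at hlt
  have hCδ : C * δ ≤ ε/8 := by
    calc C * δ ≤ C * (ε/(8*C)) := mul_le_mul_of_nonneg_left hδε (le_of_lt hC)
    _ = ε/8 := by field_simp <;> ring
  have htot : |f u - f w| < ε := by
    have habs : |f u - f w| ≤ |f u - f gu| + |f gu - f gw| + |f gw - f w| := by
      calc |f u - f w| ≤ |f u - f gu| + |f gu - f w| := abs_sub_le _ _ _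
      _ ≤ |f u - f gu| + (|f gu - f gw| + |f gw - f w|) := by
          linarith [abs_sub_le (f gu) (f gw) (f w)]
      _ = |f u - f gu| + |f gu - f gw| + |f gw - f w| := by ring
    have h2' : |f gw - f w| = |f w - f gw| := abs_sub_comm _ _
    rw [h2'] at habs
    have hδ0ε : δ0 = ε/4 := rfl
    linarith
  linarith
end
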